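/- arXiv:1806.02402 — 5 statements merged into one kernel-verified Lean document; each statement's English description precedes it below -/
import Mathlib

section
/- Let F and 𝒢 be real Hilbert spaces, S : F → 𝒢 a bounded linear operator and C = S*S. Let Ĉ : F → F be any positive self-adjoint bounded operator and λ > 0. Then the operator norm satisfies ‖S (Ĉ + λI)^{-1}‖ ≤ 1/√λ + ‖C − Ĉ‖^{1/2} / λ. -/
open ContinuousLinearMap

/-- **Bound on `‖S (Ĉ + λI)⁻¹‖`.**
`F`, `𝒢` real Hilbert spaces, `S : F → 𝒢` bounded, `C = S*S`, `Ĉ` a positive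
self-adjoint bounded operator on `F`, `λ > 0`, and `D` the (two-sided) inverse
of `Ĉ + λI`.  Then `‖S (Ĉ + λI)⁻¹‖ ≤ 1/√λ + ‖C - Ĉ‖^{1/2} / λ`. -/
theorem stmt_1 {F 𝒢 : Type*}
    [NormedAddCommGroup F] [InnerProductSpace ℝ F] [CompleteSpace F]
    [NormedAddCommGroup 𝒢] [InnerProductSpace ℝ 𝒢] [CompleteSpace 𝒢]
    (S : F →L[ℝ] 𝒢) (Chat : F →L[ℝ] F) (hChat : Chat.IsPositive)
    (lam : ℝ) (hlam : 0 < lam)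
    (D : F →L[ℝ] F)
    (hD1 : (Chat + lam • 1) ∘L D = 1) (hD2 : D ∘L (Chat + lam • 1) = 1) :
    ‖S ∘L D‖ ≤ 1 / Real.sqrt lam + Real.sqrt ‖adjoint S ∘L S - Chat‖ / lam := by
  set C := adjoint S ∘L S with hC
  have hc : (0:ℝ) ≤ ‖C - Chat‖ := norm_nonneg _
  have hsl : 0 < Real.sqrt lam := Real.sqrt_pos.mpr hlam
  have hsc : 0 ≤ Real.sqrt ‖C - Chat‖ := Real.sqrt_nonneg _
  apply opNorm_le_bound
  · positivity
  intro x
  set y := D x with hy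
  have hxy : Chat y + lam • y = x := by
    have := congrArg (fun T => T x) hD1
    simpa using this
  have hpos : 0 ≤ inner (𝕜 := ℝ) (Chat y) y := by
    simpa using hChat.inner_nonneg_left y
  have h1 : inner (𝕜 := ℝ) (Chat y) y + lam * ‖y‖^2 = inner (𝕜 := ℝ) x y := by
    rw [← hxy]
    simp [inner_add_left, real_inner_smul_left, real_inner_self_eq_norm_sq]
  have h2 : inner (𝕜 := ℝ) x y ≤ ‖x‖ * ‖y‖ := real_inner_le_norm x y
  have hyx : ‖y‖ ≤ ‖x‖ / lam := by
    rcases eq_or_lt_of_le (norm_nonneg y) with h0 | h0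
    · rw [← h0]; positivity
    · rw [le_div_iff₀ hlam]
      nlinarith
  have hip : inner (𝕜 := ℝ) (Chat y) y ≤ ‖x‖^2 / lam := by
    have : inner (𝕜 := ℝ) (Chat y) y ≤ ‖x‖ * ‖y‖ := by nlinarith [sq_nonneg ‖y‖]
    calc inner (𝕜 := ℝ) (Chat y) y ≤ ‖x‖ * ‖y‖ := this
      _ ≤ ‖x‖ * (‖x‖ / lam) := by
          exact mul_le_mul_of_nonneg_left hyx (norm_nonneg x)
      _ = ‖x‖^2 / lam := by ring
  have hS : ‖S y‖^2 = inner (𝕜 := ℝ) ((C - Chat) y) y + inner (𝕜 := ℝ) (Chat y) y := by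
    have hCy : inner (𝕜 := ℝ) (C y) y = ‖S y‖^2 := by
      simp [hC, ContinuousLinearMap.comp_apply, ContinuousLinearMap.adjoint_inner_left,
        real_inner_self_eq_norm_sq]
    simp only [ContinuousLinearMap.sub_apply, inner_sub_left]
    linarith
  have hCb : inner (𝕜 := ℝ) ((C - Chat) y) y ≤ ‖C - Chat‖ * (‖x‖ / lam)^2 := by
    calc inner (𝕜 := ℝ) ((C - Chat) y) y ≤ ‖(C - Chat) y‖ * ‖y‖ := real_inner_le_norm _ _
      _ ≤ (‖C - Chat‖ * ‖y‖) * ‖y‖ :=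
          mul_le_mul_of_nonneg_right ((C - Chat).le_opNorm y) (norm_nonneg y)
      _ = ‖C - Chat‖ * ‖y‖^2 := by ring
      _ ≤ ‖C - Chat‖ * (‖x‖ / lam)^2 := by
          apply mul_le_mul_of_nonneg_left _ hc
          exact pow_le_pow_left₀ (norm_nonneg y) hyx 2
  set a := Real.sqrt lam with ha
  set b := Real.sqrt ‖C - Chat‖ with hb
  have e1 : a ^ 2 = lam := Real.sq_sqrt hlam.le
  have e2 : b ^ 2 = ‖C - Chat‖ := Real.sq_sqrt hc
  have key : ‖S y‖ ^ 2 ≤ b ^ 2 * (‖x‖ / a ^ 2) ^ 2 + ‖x‖ ^ 2 / a ^ 2 := by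
    rw [e1, e2]; linarith
  have hsq : ‖S y‖ ^ 2 ≤ ((1 / a + b / a ^ 2) * ‖x‖) ^ 2 := by
    have ha0 : a ≠ 0 := ne_of_gt hsl
    have expand : ((1 / a + b / a ^ 2) * ‖x‖) ^ 2
        = b ^ 2 * (‖x‖ / a ^ 2) ^ 2 + ‖x‖ ^ 2 / a ^ 2 + 2 * b / a ^ 3 * ‖x‖ ^ 2 := by
      field_simp
      ring
    have hnn : 0 ≤ 2 * b / a ^ 3 * ‖x‖ ^ 2 := by positivity
    rw [expand]; linarith
  have hSy : ‖(S ∘L D) x‖ = ‖S y‖ := rfl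
  have hB : 0 ≤ (1 / a + b / a ^ 2) * ‖x‖ := by positivity
  have hfin : ‖S y‖ ≤ (1 / a + b / a ^ 2) * ‖x‖ := by
    nlinarith [norm_nonneg (S y)]
  rw [hSy, ← e1]
  exact hfin
end

section
/- Let F and H be separable real Hilbert spaces, let f_1,…,f_m ∈ F and h_1,…,h_m ∈ H, and let λ > 0. Define the positive operator Ĉ = (1/m) Σ_{j=1}^m f_j ⊗ f_j on F and the operator B̂ : H → F by B̂ h = (1/m) Σ_{j=1}^m ⟨h_j, h⟩ f_j. Then the strictly convex functional W ↦ (1/m) Σ_{j=1}^m ‖h_j − W f_j‖_H^2 + λ ‖W‖_{HS}^2 over Hilbert–Schmidt operators W : F → H has the unique minimizer Ŵ = B̂* (Ĉ + λI)^{-1}. -/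
noncomputable section

open ContinuousLinearMap RealInnerProductSpace

/-- The rank-one operator `u ⊗ v : w ↦ ⟨v, w⟩ • u`. -/
def rankOne {E H : Type*} [NormedAddCommGroup E] [InnerProductSpace ℝ E]
    [NormedAddCommGroup H] [InnerProductSpace ℝ H] (u : H) (v : E) : E →L[ℝ] H :=
  (innerSL ℝ v).smulRight u

/-- The squared Hilbert–Schmidt norm of `T : E → H` computed along a Hilbert basis of `E`
(the value is independent of the chosen basis). -/
def hsNormSq {ι E H : Type*} [NormedAddCommGroup E] [InnerProductSpace ℝ E]
    [NormedAddCommGroup H] [InnerProductSpace ℝ H]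
    (b : HilbertBasis ι ℝ E) (T : E →L[ℝ] H) : ℝ :=
  ∑' i, ‖T (b i)‖ ^ 2

section Aux

variable {F H : Type*} [NormedAddCommGroup F] [InnerProductSpace ℝ F] [CompleteSpace F]
  [NormedAddCommGroup H] [InnerProductSpace ℝ H] [CompleteSpace H] {ι : Type*}

lemma rankOne_apply' (u : H) (v : F) (x : F) : rankOne u v x = ⟪v, x⟫ • u := rfl

lemma adjoint_rankOne (u : H) (v : F) :
    adjoint (rankOne u v) = rankOne v u := by
  symm
  rw [eq_adjoint_iff]
  intro x y
  simp only [rankOne_apply', inner_smul_left, inner_smul_right, RCLike.conj_to_real,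
    conj_trivial]
  rw [real_inner_comm u x]
  ring

lemma rankOne_comp (u : H) (v : F) (T : F →L[ℝ] F) :
    rankOne u v ∘L T = rankOne u (adjoint T v) := by
  ext x
  simp [rankOne_apply', adjoint_inner_left]

lemma hsSummable_add {c : ι → F} {S T : F →L[ℝ] H}
    (hS : Summable fun i => ‖S (c i)‖ ^ 2) (hT : Summable fun i => ‖T (c i)‖ ^ 2) :
    Summable fun i => ‖(S + T) (c i)‖ ^ 2 := by
  refine Summable.of_nonneg_of_le (fun i => by positivity) (fun i => ?_) ((hS.add hT).mul_left 2)
  simp only [add_apply]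
  nlinarith [norm_add_le (S (c i)) (T (c i)), norm_nonneg (S (c i)), norm_nonneg (T (c i)),
    norm_nonneg (S (c i) + T (c i)), sq_nonneg (‖S (c i)‖ - ‖T (c i)‖)]

lemma hsSummable_smul {c : ι → F} {S : F →L[ℝ] H} (r : ℝ)
    (hS : Summable fun i => ‖S (c i)‖ ^ 2) :
    Summable fun i => ‖(r • S) (c i)‖ ^ 2 := by
  have := hS.mul_left (|r| ^ 2)
  refine this.congr fun i => ?_
  simp [norm_smul, mul_pow]

lemma hsSummable_sub {c : ι → F} {S T : F →L[ℝ] H}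
    (hS : Summable fun i => ‖S (c i)‖ ^ 2) (hT : Summable fun i => ‖T (c i)‖ ^ 2) :
    Summable fun i => ‖(S - T) (c i)‖ ^ 2 := by
  have hT' : Summable fun i => ‖(-T) (c i)‖ ^ 2 := by simpa using hT
  simpa [sub_eq_add_neg] using hsSummable_add hS hT'

lemma hsSummable_finsetSum {c : ι → F} {J : Type*} {s : Finset J} {T : J → F →L[ℝ] H}
    (hT : ∀ j ∈ s, Summable fun i => ‖(T j) (c i)‖ ^ 2) :
    Summable fun i => ‖(∑ j ∈ s, T j) (c i)‖ ^ 2 := by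
  classical
  induction s using Finset.induction with
  | empty => simpa using summable_zero
  | @insert j s hj ih =>
      rw [Finset.sum_insert hj]
      exact hsSummable_add (hT j (Finset.mem_insert_self _ _))
        (ih fun k hk => hT k (Finset.mem_insert_of_mem hk))

lemma summable_inner_apply {c : ι → F} {S T : F →L[ℝ] H}
    (hS : Summable fun i => ‖S (c i)‖ ^ 2) (hT : Summable fun i => ‖T (c i)‖ ^ 2) :
    Summable fun i => ⟪S (c i), T (c i)⟫ := by
  rw [← summable_abs_iff]
  refine Summable.of_nonneg_of_le (fun i => abs_nonneg _) (fun i => ?_)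
    ((hS.add hT).mul_left 2⁻¹)
  nlinarith [abs_real_inner_le_norm (S (c i)) (T (c i)), norm_nonneg (S (c i)),
    norm_nonneg (T (c i)), sq_nonneg (‖S (c i)‖ - ‖T (c i)‖)]

lemma inner_rankOne_eq (u : H) (v x : F) (T : F →L[ℝ] H) :
    ⟪(rankOne u v) x, T x⟫ = ⟪v, x⟫ * ⟪x, adjoint T u⟫ := by
  rw [rankOne_apply', real_inner_smul_left, adjoint_inner_right, real_inner_comm u (T x)]

lemma norm_rankOne_sq (u : H) (v x : F) :
    ‖(rankOne u v) x‖ ^ 2 = ⟪v, x⟫ * ⟪x, v⟫ * ‖u‖ ^ 2 := by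
  rw [rankOne_apply', norm_smul, mul_pow, Real.norm_eq_abs, sq_abs, real_inner_comm x v]
  ring

lemma hasSum_inner_rankOne (b : HilbertBasis ι ℝ F) (u : H) (v : F) (T : F →L[ℝ] H) :
    HasSum (fun i => ⟪(rankOne u v) (b i), T (b i)⟫) ⟪u, T v⟫ := by
  have h1 := HilbertBasis.hasSum_inner_mul_inner b v (adjoint T u)
  have e2 : ⟪v, adjoint T u⟫ = ⟪u, T v⟫ := by
    rw [real_inner_comm, adjoint_inner_left]
  rw [e2] at h1
  simpa only [inner_rankOne_eq] using h1

lemma summable_rankOne (b : HilbertBasis ι ℝ F) (u : H) (v : F) :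
    Summable fun i => ‖(rankOne u v) (b i)‖ ^ 2 := by
  have h1 := (HilbertBasis.summable_inner_mul_inner b v v).mul_right (‖u‖ ^ 2)
  exact h1.congr fun i => (norm_rankOne_sq u v (b i)).symm

lemma clm_eq_zero_of_hilbertBasis (b : HilbertBasis ι ℝ F) {T : F →L[ℝ] H}
    (hT : ∀ i, T (b i) = 0) : T = 0 := by
  ext x
  have h1 := (b.hasSum_repr x).mapL T
  have h0 : (fun i => T (b.repr x i • b i)) = fun _ => (0 : H) := by
    funext i; simp [hT i]
  rw [h0] at h1
  simpa using h1.unique hasSum_zero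

end Aux

set_option linter.unusedSectionVars false
set_option maxHeartbeats 1000000

/-- **The ridge regression problem over Hilbert–Schmidt operators has the unique
minimizer `Ŵ = B̂* (Ĉ + λI)⁻¹`.**  Here `F`, `H` are separable real Hilbert spaces
(with `b` a Hilbert basis of `F`), `Ĉ = (1/m) ∑_j f_j ⊗ f_j`,
`B̂ h = (1/m) ∑_j ⟨h_j, h⟩ f_j`, `λ > 0`, and `D` is the inverse of `Ĉ + λI`.
The functional is `W ↦ (1/m) ∑_j ‖h_j - W f_j‖² + λ‖W‖²_{HS}` over Hilbert–Schmidt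
operators `W : F → H`. -/
theorem stmt_2 {F H : Type*}
    [NormedAddCommGroup F] [InnerProductSpace ℝ F] [CompleteSpace F]
    [NormedAddCommGroup H] [InnerProductSpace ℝ H] [CompleteSpace H]
    {ι : Type*} [Countable ι] (b : HilbertBasis ι ℝ F)
    (m : ℕ) (hm : 0 < m) (f : Fin m → F) (h : Fin m → H)
    (lam : ℝ) (hlam : 0 < lam)
    (Chat : F →L[ℝ] F) (hChat : Chat = (m : ℝ)⁻¹ • ∑ j, rankOne (f j) (f j))
    (Bhat : H →L[ℝ] F) (hBhat : Bhat = (m : ℝ)⁻¹ • ∑ j, rankOne (f j) (h j))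
    (D : F →L[ℝ] F)
    (hD1 : (Chat + lam • 1) ∘L D = 1) (hD2 : D ∘L (Chat + lam • 1) = 1)
    (What : F →L[ℝ] H) (hWhat : What = adjoint Bhat ∘L D) :
    Summable (fun i => ‖What (b i)‖ ^ 2)
    ∧ ∀ W : F →L[ℝ] H, Summable (fun i => ‖W (b i)‖ ^ 2) →
        ((m : ℝ)⁻¹ * ∑ j, ‖h j - What (f j)‖ ^ 2 + lam * hsNormSq b What
            ≤ (m : ℝ)⁻¹ * ∑ j, ‖h j - W (f j)‖ ^ 2 + lam * hsNormSq b W)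
        ∧ ((m : ℝ)⁻¹ * ∑ j, ‖h j - W (f j)‖ ^ 2 + lam * hsNormSq b W
              = (m : ℝ)⁻¹ * ∑ j, ‖h j - What (f j)‖ ^ 2 + lam * hsNormSq b What
            → W = What) := by
  classical
  have hm' : (m : ℝ) ≠ 0 := Nat.cast_ne_zero.mpr hm.ne'
  -- `Chat` is self-adjoint
  have hCadj : adjoint Chat = Chat := by
    rw [hChat, map_smulₛₗ, map_sum]
    simp [adjoint_rankOne]
  -- `Chat + lam • 1` is self-adjoint
  have hone : adjoint (1 : F →L[ℝ] F) = 1 := by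
    rw [ContinuousLinearMap.one_def, adjoint_id]
  have hXadj : adjoint (Chat + lam • (1 : F →L[ℝ] F)) = Chat + lam • 1 := by
    rw [map_add, map_smulₛₗ, hCadj, hone]
    simp
  -- `adjoint D` is a right inverse of `Chat + lam • 1`
  have hD1' : (Chat + lam • 1) ∘L adjoint D = 1 := by
    have h2 := congrArg (adjoint (E := F) (F := F)) hD2
    rwa [adjoint_comp, hXadj, hone] at h2
  -- hence `D` is self-adjoint (inverses are unique)
  have hDadj : adjoint D = D := by
    have h2 : D * (Chat + lam • 1) = 1 := hD2
    have h1 : (Chat + lam • 1) * adjoint D = 1 := hD1'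
    exact (left_inv_eq_right_inv h2 h1).symm
  set g : Fin m → F := fun j => D (f j) with hgdef
  -- the adjoint of `Bhat`
  have hBadj : adjoint Bhat = (m : ℝ)⁻¹ • ∑ j, rankOne (h j) (f j) := by
    rw [hBhat, map_smulₛₗ, map_sum]
    simp [adjoint_rankOne]
  -- `What` is a finite-rank operator
  have hWexp : What = (m : ℝ)⁻¹ • ∑ j, rankOne (h j) (g j) := by
    rw [hWhat, hBadj, smul_comp]
    congr 1
    have e : (∑ j, rankOne (h j) (f j)) ∘L D = ∑ j, (rankOne (h j) (f j) ∘L D) := by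
      ext x
      simp [ContinuousLinearMap.sum_apply]
    rw [e]
    exact Finset.sum_congr rfl fun j _ => by rw [rankOne_comp, hDadj]
  -- decomposition of `f j`
  have hfg : ∀ j, f j = Chat (g j) + lam • g j := by
    intro j
    have h1 := DFunLike.congr_fun hD1 (f j)
    simpa using h1.symm
  -- summability for `What`
  have hWhatSum : Summable fun i => ‖What (b i)‖ ^ 2 := by
    rw [hWexp]
    exact hsSummable_smul _ (hsSummable_finsetSum fun j _ => summable_rankOne b (h j) (g j))
  -- the HS cross term
  have hcross : ∀ T : F →L[ℝ] H, HasSum (fun i => ⟪What (b i), T (b i)⟫)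
      ((m : ℝ)⁻¹ * ∑ j, ⟪h j, T (g j)⟫) := by
    intro T
    have h1 : HasSum (fun i => ∑ j, ⟪(rankOne (h j) (g j)) (b i), T (b i)⟫)
        (∑ j, ⟪h j, T (g j)⟫) := hasSum_sum fun j _ => hasSum_inner_rankOne b (h j) (g j) T
    have h2 := h1.mul_left (m : ℝ)⁻¹
    have e : ∀ x, ⟪What x, T x⟫ = (m : ℝ)⁻¹ * ∑ j, ⟪(rankOne (h j) (g j)) x, T x⟫ := by
      intro x
      rw [hWexp]
      simp [ContinuousLinearMap.smul_apply, ContinuousLinearMap.sum_apply,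
        real_inner_smul_left, sum_inner]
    simpa only [e] using h2
  refine ⟨hWhatSum, fun W hWsum => ?_⟩
  set Δ := W - What with hΔdef
  have hW : W = What + Δ := by rw [hΔdef]; abel
  have hΔsum : Summable fun i => ‖Δ (b i)‖ ^ 2 := hsSummable_sub hWsum hWhatSum
  have hcrossΔ := hcross Δ
  -- the key orthogonality identity
  have hkey : ∑ j, ⟪h j - What (f j), Δ (f j)⟫ = lam * ∑ j, ⟪h j, Δ (g j)⟫ := by
    have e1 : ∀ j, ⟪h j, Δ (Chat (g j))⟫
        = (m : ℝ)⁻¹ * ∑ k, ⟪f k, g j⟫ * ⟪h j, Δ (f k)⟫ := by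
      intro j
      rw [hChat]
      simp [rankOne_apply', ContinuousLinearMap.sum_apply, ContinuousLinearMap.smul_apply,
        map_smul, map_sum, inner_smul_right, inner_sum]
    have e2 : ∀ j, ⟪What (f j), Δ (f j)⟫
        = (m : ℝ)⁻¹ * ∑ k, ⟪f k, g k⟫ * 0 + (m : ℝ)⁻¹ * ∑ k, ⟪g k, f j⟫ * ⟪h k, Δ (f j)⟫ := by
      intro j
      rw [hWexp]
      simp [rankOne_apply', ContinuousLinearMap.sum_apply, ContinuousLinearMap.smul_apply,
        real_inner_smul_left, sum_inner]
    have hswap : ∑ j, ⟪h j, Δ (Chat (g j))⟫ = ∑ j, ⟪What (f j), Δ (f j)⟫ := by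
      rw [Finset.sum_congr rfl fun j _ => e1 j, Finset.sum_congr rfl fun j _ => e2 j]
      simp only [mul_zero, Finset.sum_const_zero, mul_zero, zero_add]
      rw [← Finset.mul_sum, ← Finset.mul_sum]
      congr 1
      rw [Finset.sum_comm]
      exact Finset.sum_congr rfl fun j _ => Finset.sum_congr rfl fun k _ => by
        rw [real_inner_comm (f j) (g k)]
    have e3 : ∀ j, ⟪h j - What (f j), Δ (f j)⟫
        = ⟪h j, Δ (Chat (g j))⟫ + lam * ⟪h j, Δ (g j)⟫ - ⟪What (f j), Δ (f j)⟫ := by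
      intro j
      have h4 : ⟪h j, Δ (f j)⟫ = ⟪h j, Δ (Chat (g j))⟫ + lam * ⟪h j, Δ (g j)⟫ := by
        conv_lhs => rw [hfg j]
        rw [map_add, map_smul, inner_add_right, real_inner_smul_right]
      rw [inner_sub_left, h4]
    rw [Finset.sum_congr rfl fun j _ => e3 j, Finset.sum_sub_distrib,
      Finset.sum_add_distrib, ← Finset.mul_sum, hswap]
    ring
  -- HS-norm expansion
  have hhsW : hsNormSq b W = hsNormSq b What
      + 2 * ((m : ℝ)⁻¹ * ∑ j, ⟪h j, Δ (g j)⟫) + hsNormSq b Δ := by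
    have hsum : HasSum (fun i => ‖What (b i)‖ ^ 2
          + (2 * ⟪What (b i), Δ (b i)⟫ + ‖Δ (b i)‖ ^ 2))
        (hsNormSq b What + (2 * ((m : ℝ)⁻¹ * ∑ j, ⟪h j, Δ (g j)⟫) + hsNormSq b Δ)) :=
      hWhatSum.hasSum.add ((hcrossΔ.mul_left 2).add hΔsum.hasSum)
    have e : ∀ i, ‖W (b i)‖ ^ 2 = ‖What (b i)‖ ^ 2
        + (2 * ⟪What (b i), Δ (b i)⟫ + ‖Δ (b i)‖ ^ 2) := by
      intro i
      have h5 : W (b i) = What (b i) + Δ (b i) := by rw [hW]; simp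
      rw [h5, norm_add_sq_real]
      ring
    have : hsNormSq b W = ∑' i, (‖What (b i)‖ ^ 2
        + (2 * ⟪What (b i), Δ (b i)⟫ + ‖Δ (b i)‖ ^ 2)) := tsum_congr e
    rw [this, hsum.tsum_eq]
    ring
  -- data-fit term expansion
  have hdata : ∑ j, ‖h j - W (f j)‖ ^ 2
      = ∑ j, ‖h j - What (f j)‖ ^ 2 - 2 * ∑ j, ⟪h j - What (f j), Δ (f j)⟫
        + ∑ j, ‖Δ (f j)‖ ^ 2 := by
    have e : ∀ j, ‖h j - W (f j)‖ ^ 2 = ‖h j - What (f j)‖ ^ 2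
        - 2 * ⟪h j - What (f j), Δ (f j)⟫ + ‖Δ (f j)‖ ^ 2 := by
      intro j
      have h5 : h j - W (f j) = (h j - What (f j)) - Δ (f j) := by rw [hW]; simp; abel
      rw [h5, norm_sub_sq_real]
    rw [Finset.sum_congr rfl fun j _ => e j, Finset.sum_add_distrib,
      Finset.sum_sub_distrib, ← Finset.mul_sum]
  -- assembling the decomposition of the objective
  have hdiff : (m : ℝ)⁻¹ * ∑ j, ‖h j - W (f j)‖ ^ 2 + lam * hsNormSq b W
      = ((m : ℝ)⁻¹ * ∑ j, ‖h j - What (f j)‖ ^ 2 + lam * hsNormSq b What)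
        + ((m : ℝ)⁻¹ * ∑ j, ‖Δ (f j)‖ ^ 2 + lam * hsNormSq b Δ) := by
    rw [hdata, hhsW, hkey]
    ring
  have h1 : (0 : ℝ) ≤ (m : ℝ)⁻¹ * ∑ j, ‖Δ (f j)‖ ^ 2 :=
    mul_nonneg (by positivity) (Finset.sum_nonneg fun j _ => sq_nonneg _)
  have h2 : (0 : ℝ) ≤ hsNormSq b Δ := tsum_nonneg fun i => sq_nonneg _
  have h2' : (0 : ℝ) ≤ lam * hsNormSq b Δ := mul_nonneg hlam.le h2
  constructor
  · rw [hdiff]; linarith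
  · intro heq
    have h0 : (m : ℝ)⁻¹ * ∑ j, ‖Δ (f j)‖ ^ 2 + lam * hsNormSq b Δ = 0 := by
      rw [hdiff] at heq; linarith
    have h3 : lam * hsNormSq b Δ = 0 := by linarith
    have hhs0 : hsNormSq b Δ = 0 := (mul_eq_zero.mp h3).resolve_left hlam.ne'
    have hterm : ∀ i, Δ (b i) = 0 := by
      intro i
      have hle : ‖Δ (b i)‖ ^ 2 ≤ hsNormSq b Δ :=
        Summable.le_tsum hΔsum i fun j _ => sq_nonneg _
      rw [hhs0] at hle
      have h4 : ‖Δ (b i)‖ ^ 2 = 0 := le_antisymm hle (sq_nonneg _)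
      have : ‖Δ (b i)‖ = 0 := by
        have := sq_eq_zero_iff.mp h4
        simpa using this
      exact norm_eq_zero.mp this
    have hΔ0 : Δ = 0 := clm_eq_zero_of_hilbertBasis b hterm
    rw [hΔdef] at hΔ0
    exact sub_eq_zero.mp hΔ0
end
end

section
/- Let F, 𝒢, H be real Hilbert spaces with H separable, S : F → 𝒢 bounded linear, C = S*S, L = SS*, and let λ > 0. Let G : H → 𝒢 be a Hilbert–Schmidt operator and set B = S*G : H → F. Let Ĉ : F → F be any positive self-adjoint bounded operator and B̂ : H → F any Hilbert–Schmidt operator. Writing β₁ = ‖C − Ĉ‖ (operator norm), β₂ = ‖B̂ − B‖_{HS}, and A_r(λ) = ‖(L + λI)^{-r} G‖_{HS} for r > 0, the following inequality holds: ‖S (Ĉ + λI)^{-1} B̂ − G‖_{HS} ≤ (1/√λ + β₁^{1/2}/λ) (β₁ A_{1/2}(λ) + β₂) + λ A_1(λ). -/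
noncomputable section

open ContinuousLinearMap RealInnerProductSpace
open scoped ENNReal

/-- The Hilbert–Schmidt norm of `T : E → H` along a Hilbert basis of `E`. -/
def hsNorm {ι E H : Type*} [NormedAddCommGroup E] [InnerProductSpace ℝ E]
    [NormedAddCommGroup H] [InnerProductSpace ℝ H]
    (b : HilbertBasis ι ℝ E) (T : E →L[ℝ] H) : ℝ :=
  Real.sqrt (hsNormSq b T)

private lemma memℓp_two' {ι E : Type*} [NormedAddCommGroup E] {f : ι → E}
    (hf : Summable fun i => ‖f i‖ ^ 2) : Memℓp f 2 := by
  refine memℓp_gen ?_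
  have h2 : ((2 : ℝ≥0∞)).toReal = (2 : ℝ) := by norm_num
  simpa [h2, Real.rpow_two] using hf

private lemma lp_norm_two {ι E : Type*} [NormedAddCommGroup E] (f : lp (fun _ : ι => E) 2) :
    ‖f‖ = Real.sqrt (∑' i, ‖f i‖ ^ 2) := by
  have h2 : ((2 : ℝ≥0∞)).toReal = (2 : ℝ) := by norm_num
  rw [lp.norm_eq_tsum_rpow (by norm_num) f, Real.sqrt_eq_rpow]
  simp [h2, Real.rpow_two]

private lemma sqrt_minkowski {ι : Type*} {g h : ι → ℝ}
    (hg : Summable fun i => g i ^ 2) (hh : Summable fun i => h i ^ 2) :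
    Real.sqrt (∑' i, (g i + h i) ^ 2)
      ≤ Real.sqrt (∑' i, g i ^ 2) + Real.sqrt (∑' i, h i ^ 2) := by
  have hg' : Memℓp g 2 := memℓp_two' (by simpa [sq_abs] using hg)
  have hh' : Memℓp h 2 := memℓp_two' (by simpa [sq_abs] using hh)
  have key := norm_add_le (⟨g, hg'⟩ : lp (fun _ : ι => ℝ) 2) ⟨h, hh'⟩
  rw [lp_norm_two, lp_norm_two, lp_norm_two] at key
  simp [sq_abs, Real.norm_eq_abs] at key
  exact key

private lemma summable_sq_add {ι : Type*} {g h : ι → ℝ}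
    (hg : Summable fun i => g i ^ 2) (hh : Summable fun i => h i ^ 2) :
    Summable fun i => (g i + h i) ^ 2 := by
  refine Summable.of_nonneg_of_le (fun i => sq_nonneg _) (fun i => ?_)
    (by simpa using (hg.mul_left 2).add (hh.mul_left 2))
  nlinarith [sq_nonneg (g i - h i)]

private lemma sqrt_tsum_const_mul {ι : Type*} (c : ℝ) (hc : 0 ≤ c) (g : ι → ℝ) :
    Real.sqrt (∑' i, (c * g i) ^ 2) = c * Real.sqrt (∑' i, g i ^ 2) := by
  have : ∀ i, (c * g i) ^ 2 = c ^ 2 * g i ^ 2 := fun i => by ring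
  simp_rw [this]
  rw [tsum_mul_left, Real.sqrt_mul (sq_nonneg c), Real.sqrt_sq hc]

private lemma sq_le_imp_le {a b : ℝ} (ha : 0 ≤ a) (hb : 0 ≤ b) (h : a ^ 2 ≤ b ^ 2) :
    a ≤ b := by nlinarith

/-- comparison summability through a bounded operator -/
private lemma summable_comp {ι E E' : Type*} [NormedAddCommGroup E] [InnerProductSpace ℝ E]
    [NormedAddCommGroup E'] [InnerProductSpace ℝ E']
    (A : E →L[ℝ] E') {f : ι → E} (hf : Summable fun i => ‖f i‖ ^ 2) :
    Summable fun i => ‖A (f i)‖ ^ 2 := by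
  refine Summable.of_nonneg_of_le (fun i => sq_nonneg _) (fun i => ?_) (hf.mul_left (‖A‖ ^ 2))
  calc ‖A (f i)‖ ^ 2 ≤ (‖A‖ * ‖f i‖) ^ 2 :=
        pow_le_pow_left₀ (norm_nonneg _) (A.le_opNorm _) 2
    _ = ‖A‖ ^ 2 * ‖f i‖ ^ 2 := by ring

set_option maxHeartbeats 1000000 in
/-- **Analytic decomposition of the excess risk of the estimator.**
`F`, `𝒢`, `H` real Hilbert spaces with `H` separable (with Hilbert basis `bH`),
`S : F → 𝒢` bounded, `C = S*S`, `L = SS*`, `λ > 0`, `G : H → 𝒢` Hilbert–Schmidt,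
`B = S*G`, `Ĉ` positive self-adjoint with inverse `D` of `Ĉ + λI`, `B̂ : H → F`
Hilbert–Schmidt, `Linv = (L + λI)⁻¹` with positive square root `LinvSqrt = (L+λI)^{-1/2}`.
With `β₁ = ‖C - Ĉ‖`, `β₂ = ‖B̂ - B‖_{HS}`, `A_r(λ) = ‖(L+λI)^{-r} G‖_{HS}`:
`‖S (Ĉ+λI)⁻¹ B̂ - G‖_{HS} ≤ (1/√λ + β₁^{1/2}/λ)(β₁ A_{1/2}(λ) + β₂) + λ A_1(λ)`. -/
theorem stmt_3 {F 𝒢 H : Type*}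
    [NormedAddCommGroup F] [InnerProductSpace ℝ F] [CompleteSpace F]
    [NormedAddCommGroup 𝒢] [InnerProductSpace ℝ 𝒢] [CompleteSpace 𝒢]
    [NormedAddCommGroup H] [InnerProductSpace ℝ H] [CompleteSpace H]
    {ι : Type*} [Countable ι] (bH : HilbertBasis ι ℝ H)
    (S : F →L[ℝ] 𝒢) (lam : ℝ) (hlam : 0 < lam)
    (G : H →L[ℝ] 𝒢) (hG : Summable fun i => ‖G (bH i)‖ ^ 2)
    (Chat : F →L[ℝ] F) (hChat : Chat.IsPositive)
    (Bhat : H →L[ℝ] F) (hB : Summable fun i => ‖Bhat (bH i)‖ ^ 2)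
    (D : F →L[ℝ] F)
    (hD1 : (Chat + lam • 1) ∘L D = 1) (hD2 : D ∘L (Chat + lam • 1) = 1)
    (Linv : 𝒢 →L[ℝ] 𝒢)
    (hL1 : (S ∘L adjoint S + lam • 1) ∘L Linv = 1)
    (hL2 : Linv ∘L (S ∘L adjoint S + lam • 1) = 1)
    (LinvSqrt : 𝒢 →L[ℝ] 𝒢) (hLsPos : LinvSqrt.IsPositive)
    (hLsSq : LinvSqrt ∘L LinvSqrt = Linv) :
    hsNorm bH (S ∘L D ∘L Bhat - G)
      ≤ (1 / Real.sqrt lam + Real.sqrt ‖adjoint S ∘L S - Chat‖ / lam)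
          * (‖adjoint S ∘L S - Chat‖ * hsNorm bH (LinvSqrt ∘L G)
              + hsNorm bH (Bhat - adjoint S ∘L G))
        + lam * hsNorm bH (Linv ∘L G) := by
  set β₁ : ℝ := ‖adjoint S ∘L S - Chat‖ with hβ₁
  set κ : ℝ := 1 / Real.sqrt lam + Real.sqrt β₁ / lam with hκ
  have hβ₁0 : 0 ≤ β₁ := norm_nonneg _
  have hκ0 : 0 ≤ κ := by
    have := Real.sqrt_nonneg lam
    have := Real.sqrt_nonneg β₁
    positivity
  -- pointwise relation from hD1 : (Chat + lam•1)(D y) = y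
  have k0 : ∀ y : F, Chat (D y) + lam • D y = y := by
    intro y
    have := ContinuousLinearMap.ext_iff.1 hD1 y
    simpa using this
  -- pointwise relation from hL1
  have k2 : ∀ g : 𝒢, S (adjoint S (Linv g)) + lam • Linv g = g := by
    intro g
    have := ContinuousLinearMap.ext_iff.1 hL1 g
    simpa using this
  -- pointwise relation from hD2
  have k1 : ∀ y : F, D (Chat y) + lam • D y = y := by
    intro y
    have := ContinuousLinearMap.ext_iff.1 hD2 y
    simpa [map_add, map_smul] using this
  -- norm bound on D
  have hDn : ∀ y : F, ‖D y‖ ≤ ‖y‖ / lam := by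
    intro y
    have hpos : (0:ℝ) ≤ ⟪Chat (D y), D y⟫ := by
      simpa using hChat.inner_nonneg_left (D y)
    have hiy : ⟪y, D y⟫ = ⟪Chat (D y), D y⟫ + lam * ⟪D y, D y⟫ := by
      have hexp : ⟪Chat (D y) + lam • D y, D y⟫
          = ⟪Chat (D y), D y⟫ + lam * ⟪D y, D y⟫ := by
        rw [inner_add_left, real_inner_smul_left]
      rw [← hexp, k0]
    have hcs : ⟪y, D y⟫ ≤ ‖y‖ * ‖D y‖ := real_inner_le_norm y (D y)
    have hn : ⟪D y, D y⟫ = ‖D y‖ ^ 2 := real_inner_self_eq_norm_sq (D y)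
    have h1 : lam * ‖D y‖ ^ 2 ≤ ‖y‖ * ‖D y‖ := by nlinarith
    rcases eq_or_lt_of_le (norm_nonneg (D y)) with h | h
    · rw [← h]; positivity
    · rw [le_div_iff₀ hlam]
      nlinarith
  -- key operator-norm-style bound for S ∘ D
  have hSD : ∀ y : F, ‖S (D y)‖ ≤ κ * ‖y‖ := by
    intro y
    have hpos : (0:ℝ) ≤ ⟪Chat (D y), D y⟫ := by
      simpa using hChat.inner_nonneg_left (D y)
    have hiy : ⟪y, D y⟫ = ⟪Chat (D y), D y⟫ + lam * ⟪D y, D y⟫ := by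
      have hexp : ⟪Chat (D y) + lam • D y, D y⟫
          = ⟪Chat (D y), D y⟫ + lam * ⟪D y, D y⟫ := by
        rw [inner_add_left, real_inner_smul_left]
      rw [← hexp, k0]
    have hcs : ⟪y, D y⟫ ≤ ‖y‖ * ‖D y‖ := real_inner_le_norm y (D y)
    have hnD : ⟪D y, D y⟫ = ‖D y‖ ^ 2 := real_inner_self_eq_norm_sq (D y)
    have hDy : ‖D y‖ ≤ ‖y‖ / lam := hDn y
    -- ⟪Chat (D y), D y⟫ ≤ ‖y‖²/lam
    have hCD : ⟪Chat (D y), D y⟫ ≤ ‖y‖ ^ 2 / lam := by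
      have h2 : ⟪Chat (D y), D y⟫ ≤ ‖y‖ * ‖D y‖ := by nlinarith
      have h3 : ‖y‖ * ‖D y‖ ≤ ‖y‖ * (‖y‖ / lam) :=
        mul_le_mul_of_nonneg_left hDy (norm_nonneg y)
      calc ⟪Chat (D y), D y⟫ ≤ ‖y‖ * (‖y‖ / lam) := le_trans h2 h3
        _ = ‖y‖ ^ 2 / lam := by ring
    -- ‖S (D y)‖² = ⟪(C - Chat)(D y), D y⟫ + ⟪Chat (D y), D y⟫
    have hS2 : ‖S (D y)‖ ^ 2
        = ⟪(adjoint S ∘L S - Chat) (D y), D y⟫ + ⟪Chat (D y), D y⟫ := by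
      have e1 : ⟪adjoint S (S (D y)), D y⟫ = ⟪S (D y), S (D y)⟫ :=
        adjoint_inner_left S (D y) (S (D y))
      have e2 : ⟪S (D y), S (D y)⟫ = ‖S (D y)‖ ^ 2 := real_inner_self_eq_norm_sq _
      simp only [ContinuousLinearMap.sub_apply, ContinuousLinearMap.comp_apply,
        inner_sub_left]
      rw [e1, e2]; ring
    have hop : ⟪(adjoint S ∘L S - Chat) (D y), D y⟫ ≤ β₁ * ‖D y‖ ^ 2 := by
      have := real_inner_le_norm ((adjoint S ∘L S - Chat) (D y)) (D y)
      have hle := (adjoint S ∘L S - Chat).le_opNorm (D y)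
      nlinarith [norm_nonneg (D y), norm_nonneg ((adjoint S ∘L S - Chat) (D y))]
    have hDy2 : ‖D y‖ ^ 2 ≤ (‖y‖ / lam) ^ 2 :=
      pow_le_pow_left₀ (norm_nonneg _) hDy 2
    have hfin : ‖S (D y)‖ ^ 2 ≤ ‖y‖ ^ 2 / lam + β₁ * ‖y‖ ^ 2 / lam ^ 2 := by
      have := mul_le_mul_of_nonneg_left hDy2 hβ₁0
      rw [hS2]
      have : β₁ * ‖D y‖ ^ 2 ≤ β₁ * ‖y‖ ^ 2 / lam ^ 2 := by
        calc β₁ * ‖D y‖ ^ 2 ≤ β₁ * (‖y‖ / lam) ^ 2 := mul_le_mul_of_nonneg_left hDy2 hβ₁0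
          _ = β₁ * ‖y‖ ^ 2 / lam ^ 2 := by field_simp
      linarith
    refine sq_le_imp_le (norm_nonneg _) (by positivity) ?_
    have hsl : Real.sqrt lam ^ 2 = lam := Real.sq_sqrt hlam.le
    have hsb : Real.sqrt β₁ ^ 2 = β₁ := Real.sq_sqrt hβ₁0
    have hslpos : 0 < Real.sqrt lam := Real.sqrt_pos.2 hlam
    have ea : (1 / Real.sqrt lam) ^ 2 = 1 / lam := by
      rw [div_pow, one_pow, hsl]
    have eb : (Real.sqrt β₁ / lam) ^ 2 = β₁ / lam ^ 2 := by
      rw [div_pow, hsb]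
    have hκ2 : 1 / lam + β₁ / lam ^ 2 ≤ κ ^ 2 := by
      have h2 : 0 ≤ 2 * (1 / Real.sqrt lam) * (Real.sqrt β₁ / lam) := by positivity
      have hexpand : κ ^ 2 = (1 / Real.sqrt lam) ^ 2 + (Real.sqrt β₁ / lam) ^ 2
          + 2 * (1 / Real.sqrt lam) * (Real.sqrt β₁ / lam) := by rw [hκ]; ring
      rw [hexpand, ea, eb]; linarith
    have hexp : ‖y‖ ^ 2 / lam + β₁ * ‖y‖ ^ 2 / lam ^ 2 ≤ (κ * ‖y‖) ^ 2 := by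
      have hm := mul_le_mul_of_nonneg_right hκ2 (sq_nonneg ‖y‖)
      calc ‖y‖ ^ 2 / lam + β₁ * ‖y‖ ^ 2 / lam ^ 2
          = (1 / lam + β₁ / lam ^ 2) * ‖y‖ ^ 2 := by ring
        _ ≤ κ ^ 2 * ‖y‖ ^ 2 := hm
        _ = (κ * ‖y‖) ^ 2 := by ring
    exact le_trans hfin hexp
  -- contraction property of S† ∘ LinvSqrt
  have hLsa : ContinuousLinearMap.adjoint LinvSqrt = LinvSqrt := hLsPos.isSelfAdjoint.adjoint_eq
  -- commutation of M with LinvSqrt (operator level, via the ring of endomorphisms)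
  have hcomm : (S ∘L adjoint S + lam • 1) ∘L LinvSqrt
      = LinvSqrt ∘L (S ∘L adjoint S + lam • 1) := by
    set M : 𝒢 →L[ℝ] 𝒢 := S ∘L adjoint S + lam • 1 with hM
    have hL1' : M * Linv = 1 := hL1
    have hL2' : Linv * M = 1 := hL2
    have hsq : LinvSqrt * LinvSqrt = Linv := hLsSq
    have h0 : LinvSqrt * Linv = Linv * LinvSqrt := by
      rw [← hsq, ← mul_assoc, mul_assoc]
    show M * LinvSqrt = LinvSqrt * M
    calc M * LinvSqrt = M * LinvSqrt * (Linv * M) := by rw [hL2', mul_one]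
      _ = M * (LinvSqrt * Linv) * M := by rw [mul_assoc, mul_assoc, mul_assoc]
      _ = M * (Linv * LinvSqrt) * M := by rw [h0]
      _ = (M * Linv) * (LinvSqrt * M) := by rw [mul_assoc, mul_assoc, mul_assoc]
      _ = LinvSqrt * M := by rw [hL1', one_mul]
  have hcommp : ∀ z : 𝒢, S (adjoint S (LinvSqrt z)) + lam • LinvSqrt z
      = LinvSqrt (S (adjoint S z) + lam • z) := by
    intro z
    have := ContinuousLinearMap.ext_iff.1 hcomm z
    simpa using this
  have hLsSqp : ∀ z : 𝒢, LinvSqrt (LinvSqrt z) = Linv z := fun z => by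
    have := ContinuousLinearMap.ext_iff.1 hLsSq z
    simpa using this
  have hL1p : ∀ z : 𝒢, S (adjoint S (Linv z)) + lam • Linv z = z := k2
  have hcontr : ∀ z : 𝒢, ‖adjoint S (LinvSqrt z)‖ ≤ ‖z‖ := by
    intro z
    set w : 𝒢 := LinvSqrt z with hw
    have e0 : ⟪adjoint S w, adjoint S w⟫ = ⟪w, S (adjoint S w)⟫ :=
      adjoint_inner_left S (adjoint S w) w
    have ekey : ⟪w, S (adjoint S w) + lam • w⟫ = ‖z‖ ^ 2 := by
      rw [hcommp z]
      have e1 : ⟪w, LinvSqrt (S (adjoint S z) + lam • z)⟫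
          = ⟪LinvSqrt w, S (adjoint S z) + lam • z⟫ := by
        conv_lhs => rw [← hLsa]
        exact adjoint_inner_right LinvSqrt w (S (adjoint S z) + lam • z)
      rw [e1, hw, hLsSqp z]
      -- ⟪Linv z, S (S† z) + lam • z⟫ = ‖z‖²
      have e2 : ⟪Linv z, S (adjoint S z)⟫ = ⟪S (adjoint S (Linv z)), z⟫ := by
        have a1 : ⟪Linv z, S (adjoint S z)⟫ = ⟪adjoint S (Linv z), adjoint S z⟫ :=
          (adjoint_inner_left S (adjoint S z) (Linv z)).symm
        have a2 : ⟪adjoint S (Linv z), adjoint S z⟫ = ⟪S (adjoint S (Linv z)), z⟫ :=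
          adjoint_inner_right S (adjoint S (Linv z)) z
        rw [a1, a2]
      rw [inner_add_right, e2, real_inner_smul_right]
      have : ⟪S (adjoint S (Linv z)), z⟫ + lam * ⟪Linv z, z⟫
          = ⟪S (adjoint S (Linv z)) + lam • Linv z, z⟫ := by
        rw [inner_add_left, real_inner_smul_left]
      rw [this, hL1p z, real_inner_self_eq_norm_sq]
    have hnn : (0:ℝ) ≤ lam * ‖w‖ ^ 2 := by positivity
    have : ‖adjoint S w‖ ^ 2 + lam * ‖w‖ ^ 2 = ‖z‖ ^ 2 := by
      rw [← ekey, inner_add_right, real_inner_smul_right, ← e0,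
        real_inner_self_eq_norm_sq, real_inner_self_eq_norm_sq]
    refine sq_le_imp_le (norm_nonneg _) (norm_nonneg _) ?_
    linarith
  -- pointwise decomposition
  have hdec : ∀ (g : 𝒢) (b : F), S (D b) - g
      = S (D (b - adjoint S g))
        + S (D ((adjoint S ∘L S - Chat) (adjoint S (Linv g))))
        - lam • Linv g := by
    intro g b
    set y : F := adjoint S (Linv g) with hy
    have e1 : S y = g - lam • Linv g := eq_sub_of_add_eq (k2 g)
    have e3 : D (Chat y) = y - lam • D y := eq_sub_of_add_eq (k1 y)
    have e4 : (adjoint S ∘L S - Chat) y = adjoint S (S y) - Chat y := by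
      simp
    rw [e4, e1]
    have e5 : adjoint S (g - lam • Linv g) = adjoint S g - lam • y := by
      rw [map_sub, map_smul, hy]
    rw [e5]
    simp only [map_sub, map_smul, e3, e1]
    module
  -- the three square-summable scalar sequences
  set g1 : ι → ℝ := fun i => ‖(Bhat - adjoint S ∘L G) (bH i)‖ with hg1
  set g2 : ι → ℝ := fun i => ‖(LinvSqrt ∘L G) (bH i)‖ with hg2
  set g3 : ι → ℝ := fun i => ‖(Linv ∘L G) (bH i)‖ with hg3
  have hs2 : Summable fun i => g2 i ^ 2 := summable_comp LinvSqrt hG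
  have hs3 : Summable fun i => g3 i ^ 2 := summable_comp Linv hG
  have hsSG : Summable fun i => ‖adjoint S (G (bH i))‖ ^ 2 := summable_comp (adjoint S) hG
  have hs1 : Summable fun i => g1 i ^ 2 := by
    refine Summable.of_nonneg_of_le (fun i => sq_nonneg _) (fun i => ?_)
      (by simpa using (hB.mul_left 2).add (hsSG.mul_left 2))
    have htri : g1 i ≤ ‖Bhat (bH i)‖ + ‖adjoint S (G (bH i))‖ := by
      simpa [hg1] using norm_sub_le (Bhat (bH i)) (adjoint S (G (bH i)))
    nlinarith [norm_nonneg ((Bhat - adjoint S ∘L G) (bH i)),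
      sq_nonneg (‖Bhat (bH i)‖ - ‖adjoint S (G (bH i))‖)]
  -- pointwise bound on the HS integrand
  have hptw : ∀ i, ‖(S ∘L D ∘L Bhat - G) (bH i)‖
      ≤ κ * g1 i + (κ * β₁ * g2 i + lam * g3 i) := by
    intro i
    set g : 𝒢 := G (bH i) with hg
    set b : F := Bhat (bH i) with hb
    have happ : (S ∘L D ∘L Bhat - G) (bH i) = S (D b) - g := by simp [hg, hb]
    rw [happ, hdec g b]
    have t1 : ‖S (D (b - adjoint S g))‖ ≤ κ * g1 i := by
      have : (Bhat - adjoint S ∘L G) (bH i) = b - adjoint S g := by simp [hg, hb]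
      calc ‖S (D (b - adjoint S g))‖ ≤ κ * ‖b - adjoint S g‖ := hSD _
        _ = κ * g1 i := by rw [hg1]; simp [this]
    have t2 : ‖S (D ((adjoint S ∘L S - Chat) (adjoint S (Linv g))))‖
        ≤ κ * β₁ * g2 i := by
      have hy' : Linv g = LinvSqrt (LinvSqrt g) := (hLsSqp g).symm
      have c1 : ‖adjoint S (Linv g)‖ ≤ ‖LinvSqrt g‖ := by
        rw [hy']; exact hcontr (LinvSqrt g)
      have c2 : ‖(adjoint S ∘L S - Chat) (adjoint S (Linv g))‖
          ≤ β₁ * ‖LinvSqrt g‖ := by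
        calc ‖(adjoint S ∘L S - Chat) (adjoint S (Linv g))‖
            ≤ β₁ * ‖adjoint S (Linv g)‖ := (adjoint S ∘L S - Chat).le_opNorm _
          _ ≤ β₁ * ‖LinvSqrt g‖ := mul_le_mul_of_nonneg_left c1 hβ₁0
      have c3 : g2 i = ‖LinvSqrt g‖ := by simp [hg2, hg]
      calc ‖S (D ((adjoint S ∘L S - Chat) (adjoint S (Linv g))))‖
          ≤ κ * ‖(adjoint S ∘L S - Chat) (adjoint S (Linv g))‖ := hSD _
        _ ≤ κ * (β₁ * ‖LinvSqrt g‖) := mul_le_mul_of_nonneg_left c2 hκ0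
        _ = κ * β₁ * g2 i := by rw [c3]; ring
    have t3 : ‖lam • Linv g‖ = lam * g3 i := by
      rw [norm_smul, Real.norm_eq_abs, abs_of_pos hlam]
      simp [hg3, hg]
    calc ‖S (D (b - adjoint S g))
          + S (D ((adjoint S ∘L S - Chat) (adjoint S (Linv g)))) - lam • Linv g‖
        ≤ ‖S (D (b - adjoint S g))
            + S (D ((adjoint S ∘L S - Chat) (adjoint S (Linv g))))‖ + ‖lam • Linv g‖ :=
          norm_sub_le _ _
      _ ≤ ‖S (D (b - adjoint S g))‖
            + ‖S (D ((adjoint S ∘L S - Chat) (adjoint S (Linv g))))‖ + ‖lam • Linv g‖ := by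
          gcongr
          exact norm_add_le _ _
      _ ≤ κ * g1 i + κ * β₁ * g2 i + lam * g3 i := by
          rw [t3]; gcongr
      _ = κ * g1 i + (κ * β₁ * g2 i + lam * g3 i) := by ring
  -- summability of the bounding sequence
  have hsum1 : Summable fun i => (κ * g1 i) ^ 2 := by
    have : ∀ i, (κ * g1 i) ^ 2 = κ ^ 2 * g1 i ^ 2 := fun i => by ring
    simp_rw [this]; exact hs1.mul_left _
  have hsum2 : Summable fun i => (κ * β₁ * g2 i) ^ 2 := by
    have : ∀ i, (κ * β₁ * g2 i) ^ 2 = (κ * β₁) ^ 2 * g2 i ^ 2 := fun i => by ring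
    simp_rw [this]; exact hs2.mul_left _
  have hsum3 : Summable fun i => (lam * g3 i) ^ 2 := by
    have : ∀ i, (lam * g3 i) ^ 2 = lam ^ 2 * g3 i ^ 2 := fun i => by ring
    simp_rw [this]; exact hs3.mul_left _
  have hsum23 : Summable fun i => (κ * β₁ * g2 i + lam * g3 i) ^ 2 :=
    summable_sq_add hsum2 hsum3
  have hsumu : Summable fun i => (κ * g1 i + (κ * β₁ * g2 i + lam * g3 i)) ^ 2 :=
    summable_sq_add hsum1 hsum23
  -- main estimate
  have hmain : hsNorm bH (S ∘L D ∘L Bhat - G)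
      ≤ Real.sqrt (∑' i, (κ * g1 i + (κ * β₁ * g2 i + lam * g3 i)) ^ 2) := by
    unfold hsNorm hsNormSq
    apply Real.sqrt_le_sqrt
    refine Summable.tsum_le_tsum (fun i => ?_) ?_ hsumu
    · have h := hptw i
      have h0 : (0:ℝ) ≤ ‖(S ∘L D ∘L Bhat - G) (bH i)‖ := norm_nonneg _
      nlinarith
    · refine Summable.of_nonneg_of_le (fun i => sq_nonneg _) (fun i => ?_) hsumu
      have h := hptw i
      have h0 : (0:ℝ) ≤ ‖(S ∘L D ∘L Bhat - G) (bH i)‖ := norm_nonneg _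
      nlinarith
  have hmink1 : Real.sqrt (∑' i, (κ * g1 i + (κ * β₁ * g2 i + lam * g3 i)) ^ 2)
      ≤ Real.sqrt (∑' i, (κ * g1 i) ^ 2)
        + Real.sqrt (∑' i, (κ * β₁ * g2 i + lam * g3 i) ^ 2) :=
    sqrt_minkowski hsum1 hsum23
  have hmink2 : Real.sqrt (∑' i, (κ * β₁ * g2 i + lam * g3 i) ^ 2)
      ≤ Real.sqrt (∑' i, (κ * β₁ * g2 i) ^ 2) + Real.sqrt (∑' i, (lam * g3 i) ^ 2) :=
    sqrt_minkowski hsum2 hsum3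
  have hc1 : Real.sqrt (∑' i, (κ * g1 i) ^ 2) = κ * hsNorm bH (Bhat - adjoint S ∘L G) := by
    rw [sqrt_tsum_const_mul κ hκ0 g1]; rfl
  have hc2 : Real.sqrt (∑' i, (κ * β₁ * g2 i) ^ 2)
      = κ * β₁ * hsNorm bH (LinvSqrt ∘L G) := by
    rw [sqrt_tsum_const_mul (κ * β₁) (by positivity) g2]; rfl
  have hc3 : Real.sqrt (∑' i, (lam * g3 i) ^ 2) = lam * hsNorm bH (Linv ∘L G) := by
    rw [sqrt_tsum_const_mul lam hlam.le g3]; rfl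
  calc hsNorm bH (S ∘L D ∘L Bhat - G)
      ≤ Real.sqrt (∑' i, (κ * g1 i + (κ * β₁ * g2 i + lam * g3 i)) ^ 2) := hmain
    _ ≤ Real.sqrt (∑' i, (κ * g1 i) ^ 2)
        + (Real.sqrt (∑' i, (κ * β₁ * g2 i) ^ 2) + Real.sqrt (∑' i, (lam * g3 i) ^ 2)) := by
        linarith
    _ = κ * hsNorm bH (Bhat - adjoint S ∘L G)
        + (κ * β₁ * hsNorm bH (LinvSqrt ∘L G) + lam * hsNorm bH (Linv ∘L G)) := by
        rw [hc1, hc2, hc3]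
    _ = κ * (β₁ * hsNorm bH (LinvSqrt ∘L G) + hsNorm bH (Bhat - adjoint S ∘L G))
        + lam * hsNorm bH (Linv ∘L G) := by ring
end
end

section
/- Let F, 𝒢, H be real Hilbert spaces with H separable, S : F → 𝒢 bounded linear, C = S*S, L = SS*, λ > 0, G : H → 𝒢 Hilbert–Schmidt, and B = S*G. Let Ĉ be a random positive self-adjoint bounded operator on F and B̂ a random Hilbert–Schmidt operator from H to F (defined on a common probability space, with the relevant quantities integrable). Writing β₁ = ‖C − Ĉ‖, β₂ = ‖B̂ − B‖_{HS}, and A_r(λ) = ‖(L + λI)^{-r} G‖_{HS}, one has E ‖S (Ĉ + λI)^{-1} B̂ − G‖_{HS} ≤ 2 (1 + √(E β₁²)/λ)^{1/2} ( (A_{1/2}(λ)² · E β₁² + E β₂²)/λ )^{1/2} + λ A_1(λ). -/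
noncomputable section

open ContinuousLinearMap RealInnerProductSpace MeasureTheory

section l2
variable {ι X : Type*} [NormedAddCommGroup X]

lemma meml2 {f : ι → X} (hf : Summable fun i => ‖f i‖ ^ 2) :
    Memℓp f 2 := by
  apply memℓp_gen
  have : (2 : ENNReal).toReal = ((2:ℕ):ℝ) := by norm_num
  rw [this]
  simpa only [Real.rpow_natCast] using hf

lemma norml2_eq {f : ι → X} (hf : Memℓp f 2) :
    Real.sqrt (∑' i, ‖f i‖ ^ 2) = ‖(⟨f, hf⟩ : lp (fun _ : ι => X) 2)‖ := by
  rw [lp.norm_eq_tsum_rpow (by norm_num)]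
  have h2 : (2 : ENNReal).toReal = ((2:ℕ):ℝ) := by norm_num
  rw [h2]
  simp only [Real.rpow_natCast]
  rw [Real.sqrt_eq_rpow]
  norm_num

lemma l2_triangle {f g : ι → X} (hf : Summable fun i => ‖f i‖ ^ 2)
    (hg : Summable fun i => ‖g i‖ ^ 2) :
    Real.sqrt (∑' i, ‖f i + g i‖ ^ 2)
      ≤ Real.sqrt (∑' i, ‖f i‖ ^ 2) + Real.sqrt (∑' i, ‖g i‖ ^ 2) := by
  have hf' := meml2 hf
  have hg' := meml2 hg
  have hfg : Memℓp (f + g) 2 := hf'.add hg'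
  calc Real.sqrt (∑' i, ‖f i + g i‖ ^ 2)
      = ‖(⟨f + g, hfg⟩ : lp (fun _ : ι => X) 2)‖ := norml2_eq hfg
    _ = ‖(⟨f, hf'⟩ : lp (fun _ : ι => X) 2) + ⟨g, hg'⟩‖ := rfl
    _ ≤ _ := by rw [norml2_eq hf', norml2_eq hg']; exact norm_add_le _ _

end l2

section hs
variable {ι E X Y : Type*} [NormedAddCommGroup E] [InnerProductSpace ℝ E]
  [NormedAddCommGroup X] [InnerProductSpace ℝ X]
  [NormedAddCommGroup Y] [InnerProductSpace ℝ Y]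
  (b : HilbertBasis ι ℝ E)

lemma hsNormSq_nonneg (T : E →L[ℝ] X) : 0 ≤ hsNormSq b T :=
  tsum_nonneg fun _ => sq_nonneg _

lemma hsNorm_nonneg (T : E →L[ℝ] X) : 0 ≤ hsNorm b T := Real.sqrt_nonneg _

lemma sq_hsNorm (T : E →L[ℝ] X) : hsNorm b T ^ 2 = hsNormSq b T :=
  Real.sq_sqrt (hsNormSq_nonneg b T)

lemma hsSummable_add_s4 {T U : E →L[ℝ] X} (hT : Summable fun i => ‖T (b i)‖ ^ 2)
    (hU : Summable fun i => ‖U (b i)‖ ^ 2) :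
    Summable fun i => ‖(T + U) (b i)‖ ^ 2 := by
  have := (meml2 hT).add (meml2 hU)
  have h2 : (2 : ENNReal).toReal = ((2:ℕ):ℝ) := by norm_num
  have := (memℓp_gen_iff (p := 2) (by norm_num)).1 this
  rw [h2] at this
  simp only [Real.rpow_natCast] at this
  simpa [ContinuousLinearMap.add_apply] using this

lemma hsSummable_neg {T : E →L[ℝ] X} (hT : Summable fun i => ‖T (b i)‖ ^ 2) :
    Summable fun i => ‖(-T) (b i)‖ ^ 2 := by
  simpa using hT

lemma hsSummable_sub_s4 {T U : E →L[ℝ] X} (hT : Summable fun i => ‖T (b i)‖ ^ 2)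
    (hU : Summable fun i => ‖U (b i)‖ ^ 2) :
    Summable fun i => ‖(T - U) (b i)‖ ^ 2 := by
  have := hsSummable_add_s4 b hT (hsSummable_neg b hU)
  simpa [sub_eq_add_neg] using this

lemma hsNorm_triangle {T U : E →L[ℝ] X} (hT : Summable fun i => ‖T (b i)‖ ^ 2)
    (hU : Summable fun i => ‖U (b i)‖ ^ 2) :
    hsNorm b (T + U) ≤ hsNorm b T + hsNorm b U := by
  have := l2_triangle hT hU
  simpa [hsNorm, hsNormSq, ContinuousLinearMap.add_apply] using this

lemma hsSummable_comp {A : X →L[ℝ] Y} {T : E →L[ℝ] X} {c : ℝ}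
    (hA : ∀ x, ‖A x‖ ≤ c * ‖x‖) (hT : Summable fun i => ‖T (b i)‖ ^ 2) :
    Summable fun i => ‖(A ∘L T) (b i)‖ ^ 2 := by
  refine Summable.of_nonneg_of_le (fun i => sq_nonneg _) (fun i => ?_) (hT.mul_left (c ^ 2))
  calc ‖(A ∘L T) (b i)‖ ^ 2 ≤ (c * ‖T (b i)‖) ^ 2 := by
        apply pow_le_pow_left₀ (norm_nonneg _) (hA _)
    _ = c ^ 2 * ‖T (b i)‖ ^ 2 := by ring

lemma hsNorm_comp_le {A : X →L[ℝ] Y} {T : E →L[ℝ] X} {c : ℝ} (hc : 0 ≤ c)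
    (hA : ∀ x, ‖A x‖ ≤ c * ‖x‖) (hT : Summable fun i => ‖T (b i)‖ ^ 2) :
    hsNorm b (A ∘L T) ≤ c * hsNorm b T := by
  unfold hsNorm hsNormSq
  have h1 : ∑' i, ‖(A ∘L T) (b i)‖ ^ 2 ≤ ∑' i, c ^ 2 * ‖T (b i)‖ ^ 2 := by
    refine Summable.tsum_le_tsum (fun i => ?_) (hsSummable_comp b hA hT) (hT.mul_left _)
    calc ‖(A ∘L T) (b i)‖ ^ 2 ≤ (c * ‖T (b i)‖) ^ 2 := by
          apply pow_le_pow_left₀ (norm_nonneg _) (hA _)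
      _ = c ^ 2 * ‖T (b i)‖ ^ 2 := by ring
  calc Real.sqrt (∑' i, ‖(A ∘L T) (b i)‖ ^ 2)
      ≤ Real.sqrt (∑' i, c ^ 2 * ‖T (b i)‖ ^ 2) := Real.sqrt_le_sqrt h1
    _ = c * Real.sqrt (∑' i, ‖T (b i)‖ ^ 2) := by
        rw [tsum_mul_left, Real.sqrt_mul (sq_nonneg c), Real.sqrt_sq hc]

lemma hsSummable_smul_s4 {T : E →L[ℝ] X} (c : ℝ) (hT : Summable fun i => ‖T (b i)‖ ^ 2) :
    Summable fun i => ‖(c • T) (b i)‖ ^ 2 := by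
  simp only [ContinuousLinearMap.smul_apply, norm_smul, mul_pow]
  exact (hT.mul_left _)

lemma hsNorm_smul (c : ℝ) (T : E →L[ℝ] X) :
    hsNorm b (c • T) = |c| * hsNorm b T := by
  unfold hsNorm hsNormSq
  simp only [ContinuousLinearMap.smul_apply, norm_smul, mul_pow, Real.norm_eq_abs]
  rw [tsum_mul_left, Real.sqrt_mul (by positivity), Real.sqrt_sq (abs_nonneg c)]

end hs

section ops
variable {F 𝒢 : Type*}
    [NormedAddCommGroup F] [InnerProductSpace ℝ F] [CompleteSpace F]
    [NormedAddCommGroup 𝒢] [InnerProductSpace ℝ 𝒢] [CompleteSpace 𝒢]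

-- bound on the resolvent of a positive operator
lemma res_bound {lam : ℝ} (hlam : 0 < lam) {Chat D : F →L[ℝ] F}
    (hpos : Chat.IsPositive) (hD1 : (Chat + lam • 1) ∘L D = 1) (x : F) :
    ‖D x‖ ≤ (1 / lam) * ‖x‖ := by
  have hx : Chat (D x) + lam • D x = x := by
    have := congrArg (fun T : F →L[ℝ] F => T x) hD1
    simpa [ContinuousLinearMap.comp_apply, ContinuousLinearMap.add_apply,
      ContinuousLinearMap.smul_apply] using this
  have h1 : 0 ≤ ⟪Chat (D x), D x⟫ := by
    have := hpos.inner_nonneg_left (D x)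
    simpa using this
  have h2 : ⟪Chat (D x) + lam • D x, D x⟫ = ⟪x, D x⟫ := by rw [hx]
  have h3 : ⟪Chat (D x), D x⟫ + lam * ‖D x‖ ^ 2 = ⟪x, D x⟫ := by
    rw [← h2, inner_add_left, real_inner_smul_left, real_inner_self_eq_norm_sq]
  have h4 : ⟪x, D x⟫ ≤ ‖x‖ * ‖D x‖ := real_inner_le_norm x (D x)
  have h5 : lam * ‖D x‖ ^ 2 ≤ ‖x‖ * ‖D x‖ := by linarith
  rcases eq_or_lt_of_le (norm_nonneg (D x)) with h | h
  · rw [← h]; positivity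
  · rw [div_mul_eq_mul_div, le_div_iff₀ hlam]
    nlinarith [h5, h]

-- bound on ‖S ∘ D‖
lemma SD_bound {lam : ℝ} (hlam : 0 < lam) (S : F →L[ℝ] 𝒢) {Chat D : F →L[ℝ] F}
    (hpos : Chat.IsPositive) (hD1 : (Chat + lam • 1) ∘L D = 1) (x : F) :
    ‖(S ∘L D) x‖ ≤ Real.sqrt ((1 + ‖adjoint S ∘L S - Chat‖ / lam) / lam) * ‖x‖ := by
  set b := ‖adjoint S ∘L S - Chat‖ with hb
  have hb0 : 0 ≤ b := norm_nonneg _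
  have hDx : ‖D x‖ ≤ (1 / lam) * ‖x‖ := res_bound hlam hpos hD1 x
  have hx : Chat (D x) + lam • D x = x := by
    have := congrArg (fun T : F →L[ℝ] F => T x) hD1
    simpa [ContinuousLinearMap.comp_apply, ContinuousLinearMap.add_apply,
      ContinuousLinearMap.smul_apply] using this
  have key : ‖S (D x)‖ ^ 2 ≤ (1 + b / lam) / lam * ‖x‖ ^ 2 := by
    have e1 : ‖S (D x)‖ ^ 2 = ⟪(adjoint S ∘L S) (D x), D x⟫ := by
      rw [ContinuousLinearMap.comp_apply, ContinuousLinearMap.adjoint_inner_left,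
        real_inner_self_eq_norm_sq]
    have e2 : ⟪(adjoint S ∘L S) (D x), D x⟫
        = ⟪(adjoint S ∘L S - Chat) (D x), D x⟫ + ⟪Chat (D x), D x⟫ := by
      rw [← inner_add_left, ContinuousLinearMap.sub_apply, sub_add_cancel]
    have e3 : ⟪Chat (D x), D x⟫ = ⟪x, D x⟫ - lam * ‖D x‖ ^ 2 := by
      have : ⟪Chat (D x) + lam • D x, D x⟫ = ⟪x, D x⟫ := by rw [hx]
      rw [inner_add_left, real_inner_smul_left, real_inner_self_eq_norm_sq] at this
      linarith
    have e4 : ⟪(adjoint S ∘L S - Chat) (D x), D x⟫ ≤ b * ‖D x‖ ^ 2 := by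
      calc ⟪(adjoint S ∘L S - Chat) (D x), D x⟫
          ≤ ‖(adjoint S ∘L S - Chat) (D x)‖ * ‖D x‖ := real_inner_le_norm _ _
        _ ≤ (b * ‖D x‖) * ‖D x‖ :=
            mul_le_mul_of_nonneg_right ((adjoint S ∘L S - Chat).le_opNorm _) (norm_nonneg _)
        _ = b * ‖D x‖ ^ 2 := by ring
    have e5 : ⟪x, D x⟫ ≤ (1 / lam) * ‖x‖ ^ 2 := by
      calc ⟪x, D x⟫ ≤ ‖x‖ * ‖D x‖ := real_inner_le_norm _ _
        _ ≤ ‖x‖ * ((1 / lam) * ‖x‖) :=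
            mul_le_mul_of_nonneg_left hDx (norm_nonneg _)
        _ = (1 / lam) * ‖x‖ ^ 2 := by ring
    have e6 : ‖D x‖ ^ 2 ≤ (1 / lam) ^ 2 * ‖x‖ ^ 2 := by
      calc ‖D x‖ ^ 2 ≤ ((1 / lam) * ‖x‖) ^ 2 := by
            apply pow_le_pow_left₀ (norm_nonneg _) hDx
        _ = (1 / lam) ^ 2 * ‖x‖ ^ 2 := by ring
    have hl2 : 0 < lam ^ 2 := by positivity
    rw [e1, e2, e3]
    have : b * ‖D x‖ ^ 2 ≤ b * ((1 / lam) ^ 2 * ‖x‖ ^ 2) :=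
      mul_le_mul_of_nonneg_left e6 hb0
    have hfin : b * ((1 / lam) ^ 2 * ‖x‖ ^ 2) + (1 / lam) * ‖x‖ ^ 2
        = (1 + b / lam) / lam * ‖x‖ ^ 2 := by field_simp; ring
    nlinarith [mul_nonneg (le_of_lt hlam) (sq_nonneg ‖D x‖)]
  calc ‖(S ∘L D) x‖ = Real.sqrt (‖S (D x)‖ ^ 2) := by
        rw [Real.sqrt_sq (norm_nonneg _)]; rfl
    _ ≤ Real.sqrt ((1 + b / lam) / lam * ‖x‖ ^ 2) := Real.sqrt_le_sqrt key
    _ = Real.sqrt ((1 + b / lam) / lam) * ‖x‖ := by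
        rw [Real.sqrt_mul (by positivity), Real.sqrt_sq (norm_nonneg _)]

variable {lam : ℝ} {S : F →L[ℝ] 𝒢} {Linv LinvSqrt : 𝒢 →L[ℝ] 𝒢}

lemma Ls_bound (hlam : 0 < lam)
    (hL1 : (S ∘L adjoint S + lam • 1) ∘L Linv = 1)
    (hL2 : Linv ∘L (S ∘L adjoint S + lam • 1) = 1)
    (hLsPos : LinvSqrt.IsPositive) (hLsSq : LinvSqrt ∘L LinvSqrt = Linv)
    (x : 𝒢) : ‖(adjoint S ∘L LinvSqrt) x‖ ≤ 1 * ‖x‖ := by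
  set Lop : 𝒢 →L[ℝ] 𝒢 := S ∘L adjoint S + lam • 1 with hLop
  have hL1' : ∀ z, Lop (Linv z) = z := fun z => by
    have := congrArg (fun T : 𝒢 →L[ℝ] 𝒢 => T z) hL1
    simpa [ContinuousLinearMap.comp_apply] using this
  have hL2' : ∀ z, Linv (Lop z) = z := fun z => by
    have := congrArg (fun T : 𝒢 →L[ℝ] 𝒢 => T z) hL2
    simpa [ContinuousLinearMap.comp_apply] using this
  have hsq' : ∀ z, LinvSqrt (LinvSqrt z) = Linv z := fun z => by
    have := congrArg (fun T : 𝒢 →L[ℝ] 𝒢 => T z) hLsSq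
    simpa [ContinuousLinearMap.comp_apply] using this
  have hcomm : ∀ z, Lop (LinvSqrt z) = LinvSqrt (Lop z) := by
    intro z
    have h1 : LinvSqrt z = Linv (LinvSqrt (Lop z)) := by
      conv_lhs => rw [← hL2' z, ← hsq' (Lop z)]
      rw [hsq' (LinvSqrt (Lop z))]
    rw [h1, hL1']
  have key : ∀ z, LinvSqrt (Lop (LinvSqrt z)) = z := by
    intro z; rw [hcomm, hsq', hL2']
  have selfadj : ∀ a c : 𝒢, ⟪LinvSqrt a, c⟫ = ⟪a, LinvSqrt c⟫ := by
    intro a c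
    have h := ContinuousLinearMap.isSelfAdjoint_iff'.1 hLsPos.isSelfAdjoint
    nth_rewrite 1 [← h]
    exact ContinuousLinearMap.adjoint_inner_left LinvSqrt c a
  set u := LinvSqrt x with hu
  have hS : S (adjoint S u) = Lop u - lam • u := by
    simp [hLop, ContinuousLinearMap.add_apply, ContinuousLinearMap.comp_apply,
      ContinuousLinearMap.smul_apply, ContinuousLinearMap.one_apply]
  have e1 : ‖adjoint S u‖ ^ 2 = ⟪u, S (adjoint S u)⟫ := by
    rw [← real_inner_self_eq_norm_sq]
    exact ContinuousLinearMap.adjoint_inner_left S (adjoint S u) u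
  have e2 : ⟪u, Lop u⟫ = ‖x‖ ^ 2 := by
    rw [hu, selfadj x (Lop u), key, real_inner_self_eq_norm_sq]
  have e3 : ‖adjoint S u‖ ^ 2 ≤ ‖x‖ ^ 2 := by
    rw [e1, hS, inner_sub_right, real_inner_smul_right, real_inner_self_eq_norm_sq, e2]
    nlinarith [sq_nonneg ‖u‖, hlam]
  have : ‖(adjoint S ∘L LinvSqrt) x‖ = ‖adjoint S u‖ := rfl
  rw [this, one_mul, ← Real.sqrt_sq (norm_nonneg (adjoint S u)),
    ← Real.sqrt_sq (norm_nonneg x)]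
  exact Real.sqrt_le_sqrt e3

lemma decomp {H : Type*} [NormedAddCommGroup H] [InnerProductSpace ℝ H]
    {Chat D : F →L[ℝ] F}
    (hD2 : D ∘L (Chat + lam • 1) = 1)
    (hL1 : (S ∘L adjoint S + lam • 1) ∘L Linv = 1)
    (hLsSq : LinvSqrt ∘L LinvSqrt = Linv)
    (Bhat : H →L[ℝ] F) (G : H →L[ℝ] 𝒢) :
    S ∘L D ∘L Bhat - G =
      ((S ∘L D) ∘L (Bhat - adjoint S ∘L G))
      + (((S ∘L D) ∘L (adjoint S ∘L S - Chat)) ∘L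
          ((adjoint S ∘L LinvSqrt) ∘L (LinvSqrt ∘L G)))
      + ((-lam) • (Linv ∘L G)) := by
  have hL1' : ∀ z, S (adjoint S (Linv z)) + lam • Linv z = z := fun z => by
    have := congrArg (fun T : 𝒢 →L[ℝ] 𝒢 => T z) hL1
    simpa [ContinuousLinearMap.comp_apply, ContinuousLinearMap.add_apply,
      ContinuousLinearMap.smul_apply, ContinuousLinearMap.one_apply] using this
  have hD2' : ∀ z, D (Chat z + lam • z) = z := fun z => by
    have := congrArg (fun T : F →L[ℝ] F => T z) hD2
    simpa [ContinuousLinearMap.comp_apply, ContinuousLinearMap.add_apply,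
      ContinuousLinearMap.smul_apply, ContinuousLinearMap.one_apply] using this
  have hsq' : ∀ z, LinvSqrt (LinvSqrt z) = Linv z := fun z => by
    have := congrArg (fun T : 𝒢 →L[ℝ] 𝒢 => T z) hLsSq
    simpa [ContinuousLinearMap.comp_apply] using this
  have dagger0 : ∀ g : 𝒢, S (D (adjoint S g)) =
      g - lam • Linv g + S (D ((adjoint S ∘L S - Chat) (adjoint S (Linv g)))) := by
    intro g
    have hg : S (adjoint S (Linv g)) + lam • Linv g = g := hL1' g
    have h0 : adjoint S g =
        (Chat (adjoint S (Linv g)) + lam • adjoint S (Linv g))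
          + (adjoint S ∘L S - Chat) (adjoint S (Linv g)) := by
      conv_lhs => rw [← hg]
      simp only [map_add, _root_.map_smul, ContinuousLinearMap.sub_apply,
        ContinuousLinearMap.comp_apply]
      abel
    rw [h0, map_add, map_add, hD2']
    rw [eq_sub_of_add_eq hg]
  have dagger : ∀ g : 𝒢, S (D (adjoint S g)) =
      g - lam • Linv g + (S (D (adjoint S (S (adjoint S (Linv g))))) - S (D (Chat (adjoint S (Linv g))))) := by
    intro g
    have := dagger0 g
    simpa only [ContinuousLinearMap.sub_apply, ContinuousLinearMap.comp_apply, map_sub] using this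
  ext h
  simp only [ContinuousLinearMap.sub_apply, ContinuousLinearMap.add_apply,
    ContinuousLinearMap.comp_apply, ContinuousLinearMap.smul_apply, map_sub,
    ContinuousLinearMap.neg_apply]
  rw [hsq' (G h), dagger (G h)]
  module

end ops



set_option maxHeartbeats 2000000 in
/-- **Expected analytic decomposition.**  With random positive self-adjoint `Ĉ(ω)`
(with inverse `D(ω)` of `Ĉ(ω) + λI`) and random Hilbert–Schmidt `B̂(ω)`, setting
`β₁(ω) = ‖C - Ĉ(ω)‖`, `β₂(ω) = ‖B̂(ω) - B‖_{HS}` (`C = S*S`, `B = S*G`) and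
`A_r(λ) = ‖(L+λI)^{-r} G‖_{HS}` (`L = SS*`):
`E‖S(Ĉ+λI)⁻¹B̂ - G‖_{HS}
   ≤ 2 (1 + √(Eβ₁²)/λ)^{1/2} ((A_{1/2}(λ)² Eβ₁² + Eβ₂²)/λ)^{1/2} + λ A_1(λ)`. -/
theorem stmt_4 {F 𝒢 H Ω : Type*}
    [NormedAddCommGroup F] [InnerProductSpace ℝ F] [CompleteSpace F]
    [NormedAddCommGroup 𝒢] [InnerProductSpace ℝ 𝒢] [CompleteSpace 𝒢]
    [NormedAddCommGroup H] [InnerProductSpace ℝ H] [CompleteSpace H]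
    [MeasurableSpace Ω] (P : Measure Ω) [IsProbabilityMeasure P]
    {ι : Type*} [Countable ι] (bH : HilbertBasis ι ℝ H)
    (S : F →L[ℝ] 𝒢) (lam : ℝ) (hlam : 0 < lam)
    (G : H →L[ℝ] 𝒢) (hG : Summable fun i => ‖G (bH i)‖ ^ 2)
    (Chat : Ω → F →L[ℝ] F) (hChat : ∀ ω, (Chat ω).IsPositive)
    (Bhat : Ω → H →L[ℝ] F) (hB : ∀ ω, Summable fun i => ‖Bhat ω (bH i)‖ ^ 2)
    (D : Ω → F →L[ℝ] F)
    (hD1 : ∀ ω, (Chat ω + lam • 1) ∘L D ω = 1)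
    (hD2 : ∀ ω, D ω ∘L (Chat ω + lam • 1) = 1)
    (Linv : 𝒢 →L[ℝ] 𝒢)
    (hL1 : (S ∘L adjoint S + lam • 1) ∘L Linv = 1)
    (hL2 : Linv ∘L (S ∘L adjoint S + lam • 1) = 1)
    (LinvSqrt : 𝒢 →L[ℝ] 𝒢) (hLsPos : LinvSqrt.IsPositive)
    (hLsSq : LinvSqrt ∘L LinvSqrt = Linv)
    (hint0 : Integrable (fun ω => hsNorm bH (S ∘L D ω ∘L Bhat ω - G)) P)
    (hint1 : Integrable (fun ω => ‖adjoint S ∘L S - Chat ω‖ ^ 2) P)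
    (hint2 : Integrable (fun ω => hsNormSq bH (Bhat ω - adjoint S ∘L G)) P) :
    ∫ ω, hsNorm bH (S ∘L D ω ∘L Bhat ω - G) ∂P
      ≤ 2 * Real.sqrt (1 + Real.sqrt (∫ ω, ‖adjoint S ∘L S - Chat ω‖ ^ 2 ∂P) / lam)
          * Real.sqrt ((hsNorm bH (LinvSqrt ∘L G) ^ 2
                * (∫ ω, ‖adjoint S ∘L S - Chat ω‖ ^ 2 ∂P)
              + ∫ ω, hsNormSq bH (Bhat ω - adjoint S ∘L G) ∂P) / lam)
        + lam * hsNorm bH (Linv ∘L G) := by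


  -- abbreviations
  set b1 : Ω → ℝ := fun ω => ‖adjoint S ∘L S - Chat ω‖ with hb1
  set b2 : Ω → ℝ := fun ω => hsNorm bH (Bhat ω - adjoint S ∘L G) with hb2
  set ah : ℝ := hsNorm bH (LinvSqrt ∘L G) with hah
  set a1 : ℝ := hsNorm bH (Linv ∘L G) with ha1
  have hah0 : 0 ≤ ah := hsNorm_nonneg _ _
  have hb10 : ∀ ω, 0 ≤ b1 ω := fun ω => norm_nonneg _
  have hb20 : ∀ ω, 0 ≤ b2 ω := fun ω => hsNorm_nonneg _ _
  set c : Ω → ℝ := fun ω => Real.sqrt ((1 + b1 ω / lam) / lam) with hc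
  have hc0 : ∀ ω, 0 ≤ c ω := fun ω => Real.sqrt_nonneg _
  -- summability facts
  have hLsG : Summable fun i => ‖(LinvSqrt ∘L G) (bH i)‖ ^ 2 :=
    hsSummable_comp bH (fun x => LinvSqrt.le_opNorm x) hG
  have hSstarG : Summable fun i => ‖(adjoint S ∘L G) (bH i)‖ ^ 2 :=
    hsSummable_comp bH (fun x => (adjoint S).le_opNorm x) hG
  have hsub : ∀ ω, Summable fun i => ‖(Bhat ω - adjoint S ∘L G) (bH i)‖ ^ 2 :=
    fun ω => hsSummable_sub_s4 bH (hB ω) hSstarG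
  have hmid : Summable fun i =>
      ‖((adjoint S ∘L LinvSqrt) ∘L (LinvSqrt ∘L G)) (bH i)‖ ^ 2 :=
    hsSummable_comp bH (Ls_bound hlam hL1 hL2 hLsPos hLsSq) hLsG
  -- pointwise bound
  have key : ∀ ω, hsNorm bH (S ∘L D ω ∘L Bhat ω - G)
      ≤ c ω * (ah * b1 ω + b2 ω) + lam * a1 := by
    intro ω
    have hSD : ∀ x, ‖(S ∘L D ω) x‖ ≤ c ω * ‖x‖ :=
      SD_bound hlam S (hChat ω) (hD1 ω)
    have hA2 : ∀ x, ‖((S ∘L D ω) ∘L (adjoint S ∘L S - Chat ω)) x‖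
        ≤ (c ω * b1 ω) * ‖x‖ := by
      intro x
      calc ‖((S ∘L D ω) ∘L (adjoint S ∘L S - Chat ω)) x‖
          ≤ c ω * ‖(adjoint S ∘L S - Chat ω) x‖ := hSD _
        _ ≤ c ω * (b1 ω * ‖x‖) :=
            mul_le_mul_of_nonneg_left ((adjoint S ∘L S - Chat ω).le_opNorm x) (hc0 ω)
        _ = (c ω * b1 ω) * ‖x‖ := by ring
    have hT1sum : Summable fun i =>
        ‖((S ∘L D ω) ∘L (Bhat ω - adjoint S ∘L G)) (bH i)‖ ^ 2 :=
      hsSummable_comp bH hSD (hsub ω)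
    have hT2sum : Summable fun i =>
        ‖(((S ∘L D ω) ∘L (adjoint S ∘L S - Chat ω)) ∘L
            ((adjoint S ∘L LinvSqrt) ∘L (LinvSqrt ∘L G))) (bH i)‖ ^ 2 :=
      hsSummable_comp bH hA2 hmid
    have hd := decomp (hD2 ω) hL1 hLsSq (Bhat ω) G
    rw [hd]
    have t1 : hsNorm bH ((S ∘L D ω) ∘L (Bhat ω - adjoint S ∘L G)) ≤ c ω * b2 ω :=
      hsNorm_comp_le bH (hc0 ω) hSD (hsub ω)
    have t2 : hsNorm bH (((S ∘L D ω) ∘L (adjoint S ∘L S - Chat ω)) ∘L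
          ((adjoint S ∘L LinvSqrt) ∘L (LinvSqrt ∘L G)))
        ≤ (c ω * b1 ω) * (1 * ah) := by
      have inner_le : hsNorm bH ((adjoint S ∘L LinvSqrt) ∘L (LinvSqrt ∘L G)) ≤ 1 * ah :=
        hsNorm_comp_le bH zero_le_one (Ls_bound hlam hL1 hL2 hLsPos hLsSq) hLsG
      calc hsNorm bH (((S ∘L D ω) ∘L (adjoint S ∘L S - Chat ω)) ∘L
            ((adjoint S ∘L LinvSqrt) ∘L (LinvSqrt ∘L G)))
          ≤ (c ω * b1 ω) * hsNorm bH ((adjoint S ∘L LinvSqrt) ∘L (LinvSqrt ∘L G)) :=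
            hsNorm_comp_le bH (mul_nonneg (hc0 ω) (hb10 ω)) hA2 hmid
        _ ≤ (c ω * b1 ω) * (1 * ah) :=
            mul_le_mul_of_nonneg_left inner_le (mul_nonneg (hc0 ω) (hb10 ω))
    have t3 : hsNorm bH ((-lam) • (Linv ∘L G)) = lam * a1 := by
      rw [hsNorm_smul, abs_neg, abs_of_pos hlam]
    have tri1 : hsNorm bH (((S ∘L D ω) ∘L (Bhat ω - adjoint S ∘L G))
          + (((S ∘L D ω) ∘L (adjoint S ∘L S - Chat ω)) ∘L
              ((adjoint S ∘L LinvSqrt) ∘L (LinvSqrt ∘L G)))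
          + ((-lam) • (Linv ∘L G)))
        ≤ hsNorm bH (((S ∘L D ω) ∘L (Bhat ω - adjoint S ∘L G))
          + (((S ∘L D ω) ∘L (adjoint S ∘L S - Chat ω)) ∘L
              ((adjoint S ∘L LinvSqrt) ∘L (LinvSqrt ∘L G))))
          + hsNorm bH ((-lam) • (Linv ∘L G)) :=
      hsNorm_triangle bH (hsSummable_add_s4 bH hT1sum hT2sum) (hsSummable_smul_s4 bH _ (hsSummable_comp bH (fun x => Linv.le_opNorm x) hG))
    have tri2 : hsNorm bH (((S ∘L D ω) ∘L (Bhat ω - adjoint S ∘L G))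
          + (((S ∘L D ω) ∘L (adjoint S ∘L S - Chat ω)) ∘L
              ((adjoint S ∘L LinvSqrt) ∘L (LinvSqrt ∘L G))))
        ≤ hsNorm bH ((S ∘L D ω) ∘L (Bhat ω - adjoint S ∘L G))
          + hsNorm bH (((S ∘L D ω) ∘L (adjoint S ∘L S - Chat ω)) ∘L
              ((adjoint S ∘L LinvSqrt) ∘L (LinvSqrt ∘L G))) :=
      hsNorm_triangle bH hT1sum hT2sum
    have : c ω * b2 ω + (c ω * b1 ω) * (1 * ah) + lam * a1
        = c ω * (ah * b1 ω + b2 ω) + lam * a1 := by ring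
    linarith
  -- measurability / integrability
  have mb1 : AEStronglyMeasurable b1 P := by
    have h := hint1.1
    have hforall : b1 = fun ω => Real.sqrt (‖adjoint S ∘L S - Chat ω‖ ^ 2) :=
      funext fun ω => (Real.sqrt_sq (norm_nonneg _)).symm
    rw [hforall]
    exact Real.continuous_sqrt.comp_aestronglyMeasurable h
  have mb2 : AEStronglyMeasurable b2 P :=
    Real.continuous_sqrt.comp_aestronglyMeasurable hint2.1
  have pb1 : MemLp b1 2 P := by
    refine (memLp_two_iff_integrable_sq mb1).2 ?_
    simpa [hb1] using hint1
  have hb2sq : (fun ω => b2 ω ^ 2) = fun ω => hsNormSq bH (Bhat ω - adjoint S ∘L G) :=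
    funext fun ω => sq_hsNorm bH _
  have pb2 : MemLp b2 2 P := by
    refine (memLp_two_iff_integrable_sq mb2).2 ?_
    rw [hb2sq]; exact hint2
  have ib1 : Integrable b1 P := pb1.integrable one_le_two
  have ib1sq : Integrable (fun ω => b1 ω ^ 2) P := by simpa [hb1] using hint1
  have ib2sq : Integrable (fun ω => b2 ω ^ 2) P := by rw [hb2sq]; exact hint2
  set I1 : ℝ := ∫ ω, ‖adjoint S ∘L S - Chat ω‖ ^ 2 ∂P with hI1
  set I2 : ℝ := ∫ ω, hsNormSq bH (Bhat ω - adjoint S ∘L G) ∂P with hI2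
  have hI10 : 0 ≤ I1 := integral_nonneg fun ω => sq_nonneg _
  have hI20 : 0 ≤ I2 := integral_nonneg fun ω => hsNormSq_nonneg bH _
  have hI1b : I1 = ∫ ω, b1 ω ^ 2 ∂P := rfl
  have hI2b : I2 = ∫ ω, b2 ω ^ 2 ∂P := by rw [hb2sq]
  have h22 : Real.HolderConjugate 2 2 := ⟨by norm_num, by norm_num, by norm_num⟩
  have h2e : ENNReal.ofReal (2:ℝ) = 2 := by
    rw [ENNReal.ofReal_ofNat]
  -- ∫ b1 ≤ √I1
  have hEb1 : ∫ ω, b1 ω ∂P ≤ Real.sqrt I1 := by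
    have pone : MemLp (fun _ : Ω => (1:ℝ)) (ENNReal.ofReal 2) P := by
      rw [h2e]; exact memLp_const 1
    have this0 := integral_mul_le_Lp_mul_Lq_of_nonneg h22
      (Filter.Eventually.of_forall hb10) (Filter.Eventually.of_forall fun _ => zero_le_one)
      (by rw [h2e]; exact pb1) pone
    have e1 : ∫ ω, b1 ω * 1 ∂P = ∫ ω, b1 ω ∂P := by simp
    have e2 : (∫ _ω : Ω, (1:ℝ) ^ (2:ℝ) ∂P) = 1 := by
      simp [Real.one_rpow, measure_univ]
    have e3 : (∫ ω, b1 ω ^ (2:ℝ) ∂P) = I1 := by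
      rw [hI1b]
      apply integral_congr_ae
      filter_upwards with ω
      rw [show ((2:ℝ)) = ((2:ℕ):ℝ) by norm_num, Real.rpow_natCast]
    rw [e1, e2, e3] at this0
    calc ∫ ω, b1 ω ∂P ≤ I1 ^ (1/(2:ℝ)) * (1:ℝ) ^ (1/(2:ℝ)) := this0
      _ = Real.sqrt I1 := by rw [Real.one_rpow, mul_one, ← Real.sqrt_eq_rpow]
  -- the two L² functions
  set f : Ω → ℝ := fun ω => Real.sqrt (1 + b1 ω / lam) with hf
  set g : Ω → ℝ := fun ω => (ah * b1 ω + b2 ω) / Real.sqrt lam with hg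
  have hf0 : ∀ ω, 0 ≤ f ω := fun ω => Real.sqrt_nonneg _
  have hg0 : ∀ ω, 0 ≤ g ω := fun ω =>
    div_nonneg (add_nonneg (mul_nonneg hah0 (hb10 ω)) (hb20 ω)) (Real.sqrt_nonneg _)
  have hfg : ∀ ω, c ω * (ah * b1 ω + b2 ω) = f ω * g ω := by
    intro ω
    show Real.sqrt ((1 + b1 ω / lam) / lam) * (ah * b1 ω + b2 ω)
        = Real.sqrt (1 + b1 ω / lam) * ((ah * b1 ω + b2 ω) / Real.sqrt lam)
    rw [Real.sqrt_div (by positivity : (0:ℝ) ≤ 1 + b1 ω / lam)]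
    ring
  have mf : AEStronglyMeasurable f P := by
    apply Real.continuous_sqrt.comp_aestronglyMeasurable
    simp only [div_eq_mul_inv]
    exact aestronglyMeasurable_const.add (mb1.mul aestronglyMeasurable_const)
  have mg : AEStronglyMeasurable g P := by
    have : g = fun ω => (ah * b1 ω + b2 ω) * (Real.sqrt lam)⁻¹ := by
      funext ω; exact div_eq_mul_inv _ _
    rw [this]
    exact ((aestronglyMeasurable_const.mul mb1).add mb2).mul aestronglyMeasurable_const
  have hfsq : (fun ω => f ω ^ 2) = fun ω => 1 + b1 ω / lam := by
    funext ω
    rw [hf, Real.sq_sqrt (by positivity)]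
  have ifsq : Integrable (fun ω => f ω ^ 2) P := by
    rw [hfsq]
    exact (integrable_const 1).add (ib1.div_const lam)
  have pf : MemLp f 2 P := (memLp_two_iff_integrable_sq mf).2 ifsq
  have pg : MemLp g 2 P := by
    have : MemLp (fun ω => ah * b1 ω + b2 ω) 2 P := (pb1.const_mul ah).add pb2
    have h := this.const_mul (1 / Real.sqrt lam)
    refine MemLp.ae_eq ?_ h
    filter_upwards with ω
    rw [hg]
    ring
  have igsq : Integrable (fun ω => g ω ^ 2) P := pg.integrable_sq
  -- product integrable
  have ifg : Integrable (fun ω => f ω * g ω) P := by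
    refine Integrable.mono' (ifsq.add igsq) (mf.mul mg) ?_
    filter_upwards with ω
    have hfg2 : f ω * g ω ≤ f ω ^ 2 + g ω ^ 2 := by
      nlinarith [sq_nonneg (f ω - g ω), hf0 ω, hg0 ω]
    calc ‖f ω * g ω‖ = f ω * g ω := by
          rw [Real.norm_eq_abs, abs_of_nonneg (mul_nonneg (hf0 ω) (hg0 ω))]
      _ ≤ f ω ^ 2 + g ω ^ 2 := hfg2
  -- Cauchy–Schwarz
  have hCS : ∫ ω, f ω * g ω ∂P
      ≤ Real.sqrt (∫ ω, f ω ^ 2 ∂P) * Real.sqrt (∫ ω, g ω ^ 2 ∂P) := by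
    have := integral_mul_le_Lp_mul_Lq_of_nonneg h22
      (Filter.Eventually.of_forall hf0) (Filter.Eventually.of_forall hg0)
      (by rw [h2e]; exact pf) (by rw [h2e]; exact pg)
    have hconv : ∀ (u : Ω → ℝ), (∫ ω, u ω ^ (2:ℝ) ∂P) = ∫ ω, u ω ^ 2 ∂P := by
      intro u
      apply integral_congr_ae
      filter_upwards with ω
      rw [show ((2:ℝ)) = ((2:ℕ):ℝ) by norm_num, Real.rpow_natCast]
    rw [hconv f, hconv g] at this
    calc ∫ ω, f ω * g ω ∂P
        ≤ (∫ ω, f ω ^ 2 ∂P) ^ (1/(2:ℝ)) * (∫ ω, g ω ^ 2 ∂P) ^ (1/(2:ℝ)) := this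
      _ = Real.sqrt (∫ ω, f ω ^ 2 ∂P) * Real.sqrt (∫ ω, g ω ^ 2 ∂P) := by
          rw [← Real.sqrt_eq_rpow, ← Real.sqrt_eq_rpow]
  -- evaluate / bound ∫ f², ∫ g²
  have hIf : ∫ ω, f ω ^ 2 ∂P ≤ 1 + Real.sqrt I1 / lam := by
    rw [hfsq]
    rw [integral_add (integrable_const 1) (ib1.div_const lam), integral_const]
    simp only [measure_univ, probReal_univ, ENNReal.toReal_one, smul_eq_mul, one_mul, integral_div]
    have := hEb1
    gcongr
  have hIg : ∫ ω, g ω ^ 2 ∂P ≤ 2 * ((ah ^ 2 * I1 + I2) / lam) := by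
    have hgsq : (fun ω => g ω ^ 2) = fun ω => (ah * b1 ω + b2 ω) ^ 2 / lam := by
      funext ω
      rw [hg, div_pow, Real.sq_sqrt (le_of_lt hlam)]
    rw [hgsq]
    have step : ∫ ω, (ah * b1 ω + b2 ω) ^ 2 ∂P ≤ 2 * (ah ^ 2 * I1 + I2) := by
      have isum : Integrable (fun ω => (ah * b1 ω + b2 ω) ^ 2) P :=
        ((pb1.const_mul ah).add pb2).integrable_sq
      have irhs : Integrable (fun ω => 2 * (ah ^ 2 * b1 ω ^ 2 + b2 ω ^ 2)) P :=
        ((ib1sq.const_mul (ah ^ 2)).add ib2sq).const_mul 2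
      calc ∫ ω, (ah * b1 ω + b2 ω) ^ 2 ∂P
          ≤ ∫ ω, 2 * (ah ^ 2 * b1 ω ^ 2 + b2 ω ^ 2) ∂P := by
            refine integral_mono isum irhs fun ω => ?_
            dsimp only
            nlinarith [sq_nonneg (ah * b1 ω - b2 ω)]
        _ = 2 * (ah ^ 2 * I1 + I2) := by
            rw [integral_const_mul, integral_add (ib1sq.const_mul _) ib2sq,
              integral_const_mul, hI1b, hI2b]
    rw [integral_div]
    rw [show 2 * ((ah ^ 2 * I1 + I2) / lam) = (2 * (ah ^ 2 * I1 + I2)) / lam by ring]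
    exact (div_le_div_iff_of_pos_right hlam).2 step
  -- final combination
  have hQ0 : 0 ≤ (ah ^ 2 * I1 + I2) / lam :=
    div_nonneg (add_nonneg (mul_nonneg (sq_nonneg ah) hI10) hI20) (le_of_lt hlam)
  have hfin : Real.sqrt (∫ ω, f ω ^ 2 ∂P) * Real.sqrt (∫ ω, g ω ^ 2 ∂P)
      ≤ 2 * Real.sqrt (1 + Real.sqrt I1 / lam) * Real.sqrt ((ah ^ 2 * I1 + I2) / lam) := by
    have h1 : Real.sqrt (∫ ω, f ω ^ 2 ∂P) ≤ Real.sqrt (1 + Real.sqrt I1 / lam) :=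
      Real.sqrt_le_sqrt hIf
    have h2 : Real.sqrt (∫ ω, g ω ^ 2 ∂P) ≤ Real.sqrt (2 * ((ah ^ 2 * I1 + I2) / lam)) :=
      Real.sqrt_le_sqrt hIg
    have h3 : Real.sqrt (2 * ((ah ^ 2 * I1 + I2) / lam))
        ≤ 2 * Real.sqrt ((ah ^ 2 * I1 + I2) / lam) := by
      rw [Real.sqrt_mul (by norm_num : (0:ℝ) ≤ 2)]
      have : Real.sqrt 2 ≤ 2 := by
        nlinarith [Real.sq_sqrt (by norm_num : (0:ℝ) ≤ 2), Real.sqrt_nonneg 2]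
      exact mul_le_mul_of_nonneg_right this (Real.sqrt_nonneg _)
    calc Real.sqrt (∫ ω, f ω ^ 2 ∂P) * Real.sqrt (∫ ω, g ω ^ 2 ∂P)
        ≤ Real.sqrt (1 + Real.sqrt I1 / lam) * Real.sqrt (2 * ((ah ^ 2 * I1 + I2) / lam)) :=
          mul_le_mul h1 h2 (Real.sqrt_nonneg _) (Real.sqrt_nonneg _)
      _ ≤ Real.sqrt (1 + Real.sqrt I1 / lam) * (2 * Real.sqrt ((ah ^ 2 * I1 + I2) / lam)) :=
          mul_le_mul_of_nonneg_left h3 (Real.sqrt_nonneg _)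
      _ = 2 * Real.sqrt (1 + Real.sqrt I1 / lam) * Real.sqrt ((ah ^ 2 * I1 + I2) / lam) := by
          ring
  -- chain everything
  calc ∫ ω, hsNorm bH (S ∘L D ω ∘L Bhat ω - G) ∂P
      ≤ ∫ ω, (f ω * g ω + lam * a1) ∂P := by
        apply integral_mono hint0 (ifg.add (integrable_const _))
        intro ω
        have := key ω
        rw [hfg ω] at this
        exact this
    _ = (∫ ω, f ω * g ω ∂P) + lam * a1 := by
        rw [integral_add ifg (integrable_const _), integral_const]
        simp [measure_univ]
    _ ≤ Real.sqrt (∫ ω, f ω ^ 2 ∂P) * Real.sqrt (∫ ω, g ω ^ 2 ∂P) + lam * a1 := by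
        linarith [hCS]
    _ ≤ 2 * Real.sqrt (1 + Real.sqrt I1 / lam) * Real.sqrt ((ah ^ 2 * I1 + I2) / lam)
          + lam * a1 := by linarith [hfin]
end
end

section
/- Let X be a measurable space, P a finite set, ρ_X a probability measure on X, [X] a measurable part space with part-selection (x,p) ↦ x_p, and let k̄ : [X]×[X] → ℝ and k₀ : X×X → ℝ be symmetric positive semidefinite kernels bounded on the diagonal: r̄ = sup_ξ k̄(ξ,ξ) < ∞ and r₀ = sup_x k₀(x,x) < ∞. Define the sum kernel k((x,p),(x',q)) = k̄(x_p, x'_q) + k₀(x,x') δ_{p,q}. Then for all p, q ∈ P, the within-locality covariance C_{p,q} = E_{x,x'∼ρ_X i.i.d.} [ k((x,p),(x,q))² − k((x,p),(x',q))² ] satisfies C_{p,q} ≤ C̄_{p,q} + (4 r̄ + r₀) r₀ δ_{p,q}, where C̄_{p,q} = E_{x,x'∼ρ_X i.i.d.} [ k̄(x_p,x_q)² − k̄(x_p,x'_q)² ]. -/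
noncomputable section

open MeasureTheory

/-- A symmetric positive semidefinite real kernel on a set `A`. -/
def IsPSDKernel {A : Type*} (K : A → A → ℝ) : Prop :=
  (∀ a b, K a b = K b a) ∧
    ∀ (n : ℕ) (a : Fin n → A) (c : Fin n → ℝ),
      0 ≤ ∑ i, ∑ j, c i * c j * K (a i) (a j)

lemma psd_diag {A : Type*} {K : A → A → ℝ} (h : IsPSDKernel K) (a : A) : 0 ≤ K a a := by
  have := h.2 1 (fun _ => a) (fun _ => 1)
  simpa using this

lemma psd_abs {A : Type*} {K : A → A → ℝ} (h : IsPSDKernel K) (a b : A) :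
    |K a b| ≤ (K a a + K b b) / 2 := by
  have h1 := h.2 2 ![a, b] ![1, 1]
  have h2 := h.2 2 ![a, b] ![1, -1]
  simp [Fin.sum_univ_two] at h1 h2
  have hs := h.1 b a
  rw [abs_le]
  constructor <;> nlinarith

/-- **Within-locality of the sum (universal + restriction) kernel.**
For `k((x,p),(x',q)) = k̄(x_p,x'_q) + k₀(x,x') δ_{p,q}`, with `k̄`, `k₀` symmetric
PSD kernels bounded on the diagonal by `r̄ = sup k̄(ξ,ξ)` and `r₀ = sup k₀(x,x)`:
`C_{p,q} ≤ C̄_{p,q} + (4r̄ + r₀) r₀ δ_{p,q}`, where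
`C_{p,q} = E_{x,x'}[k((x,p),(x,q))² - k((x,p),(x',q))²]` and
`C̄_{p,q} = E_{x,x'}[k̄(x_p,x_q)² - k̄(x_p,x'_q)²]`. -/
theorem stmt_17 {X P W : Type*} [MeasurableSpace X] [Fintype P] [DecidableEq P]
    (ρX : Measure X) [IsProbabilityMeasure ρX]
    (part : X → P → W)
    (kbar : W → W → ℝ) (k0 : X → X → ℝ)
    (hkbarPSD : IsPSDKernel kbar) (hk0PSD : IsPSDKernel k0)
    (rbar r0 : ℝ)
    (hrbarBdd : BddAbove (Set.range fun w => kbar w w))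
    (hrbar : rbar = ⨆ w, kbar w w)
    (hr0Bdd : BddAbove (Set.range fun x => k0 x x))
    (hr0 : r0 = ⨆ x, k0 x x)
    (hkbarMeas : ∀ p q, Measurable fun xx' : X × X => kbar (part xx'.1 p) (part xx'.2 q))
    (hk0Meas : Measurable fun xx' : X × X => k0 xx'.1 xx'.2)
    (Cov Covbar : P → P → ℝ)
    (hCov : ∀ p q, Cov p q = ∫ x, ∫ x',
        ((kbar (part x p) (part x q) + k0 x x * (if p = q then (1 : ℝ) else 0)) ^ 2
          - (kbar (part x p) (part x' q) + k0 x x' * (if p = q then (1 : ℝ) else 0)) ^ 2)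
        ∂ρX ∂ρX)
    (hCovbar : ∀ p q, Covbar p q = ∫ x, ∫ x',
        (kbar (part x p) (part x q) ^ 2 - kbar (part x p) (part x' q) ^ 2) ∂ρX ∂ρX) :
    ∀ p q : P, Cov p q ≤ Covbar p q + (4 * rbar + r0) * r0 * (if p = q then (1 : ℝ) else 0) := by
  intro p q
  by_cases hpq : p = q
  · subst hpq
    simp only [eq_self_iff_true, if_true, mul_one]
    -- nonemptiness
    have hXne : Nonempty X := by
      by_contra h
      rw [not_nonempty_iff] at h
      have h1 : ρX Set.univ = 1 := measure_univ
      rw [Set.univ_eq_empty_iff.mpr h] at h1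
      simp at h1
    obtain ⟨x₀⟩ := hXne
    -- basic bounds
    have hkd : ∀ w : W, kbar w w ≤ rbar := fun w => hrbar ▸ le_ciSup hrbarBdd w
    have hk0d : ∀ x : X, k0 x x ≤ r0 := fun x => hr0 ▸ le_ciSup hr0Bdd x
    have hr0nn : 0 ≤ r0 := le_trans (psd_diag hk0PSD x₀) (hk0d x₀)
    have hrbarnn : 0 ≤ rbar := le_trans (psd_diag hkbarPSD (part x₀ p)) (hkd (part x₀ p))
    have hkb : ∀ a b : W, |kbar a b| ≤ rbar := by
      intro a b
      refine le_trans (psd_abs hkbarPSD a b) ?_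
      have := hkd a; have := hkd b; linarith
    have hk0b : ∀ a b : X, |k0 a b| ≤ r0 := by
      intro a b
      refine le_trans (psd_abs hk0PSD a b) ?_
      have := hk0d a; have := hk0d b; linarith
    have hk0dn : ∀ x : X, 0 ≤ k0 x x := psd_diag hk0PSD
    -- the two integrands on the product space
    set F : X × X → ℝ := fun z =>
      (kbar (part z.1 p) (part z.1 p) + k0 z.1 z.1) ^ 2
        - (kbar (part z.1 p) (part z.2 p) + k0 z.1 z.2) ^ 2 with hF
    set G : X × X → ℝ := fun z =>
      kbar (part z.1 p) (part z.1 p) ^ 2 - kbar (part z.1 p) (part z.2 p) ^ 2 with hG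
    -- measurability
    have hdiag : Measurable fun x : X => ((x, x) : X × X) :=
      measurable_id.prodMk measurable_id
    have hm1 : Measurable fun z : X × X => kbar (part z.1 p) (part z.1 p) :=
      (hkbarMeas p p).comp (hdiag.comp measurable_fst)
    have hm2 : Measurable fun z : X × X => kbar (part z.1 p) (part z.2 p) := hkbarMeas p p
    have hm3 : Measurable fun z : X × X => k0 z.1 z.1 :=
      hk0Meas.comp (hdiag.comp measurable_fst)
    have hm4 : Measurable fun z : X × X => k0 z.1 z.2 := hk0Meas
    have hFm : Measurable F := by
      exact ((hm1.add hm3).pow_const 2).sub ((hm2.add hm4).pow_const 2)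
    have hGm : Measurable G := ((hm1.pow_const 2).sub (hm2.pow_const 2))
    -- boundedness
    have hFb : ∀ z : X × X, ‖F z‖ ≤ 2 * (rbar + r0) ^ 2 := by
      intro z
      have h1 := abs_le.mp (hkb (part z.1 p) (part z.1 p))
      have h2 := abs_le.mp (hkb (part z.1 p) (part z.2 p))
      have h3 := abs_le.mp (hk0b z.1 z.1)
      have h4 := abs_le.mp (hk0b z.1 z.2)
      have e1 : (kbar (part z.1 p) (part z.1 p) + k0 z.1 z.1) ^ 2 ≤ (rbar + r0) ^ 2 :=
        sq_le_sq' (by linarith) (by linarith)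
      have e2 : (kbar (part z.1 p) (part z.2 p) + k0 z.1 z.2) ^ 2 ≤ (rbar + r0) ^ 2 :=
        sq_le_sq' (by linarith) (by linarith)
      have e3 := sq_nonneg (kbar (part z.1 p) (part z.1 p) + k0 z.1 z.1)
      have e4 := sq_nonneg (kbar (part z.1 p) (part z.2 p) + k0 z.1 z.2)
      rw [Real.norm_eq_abs, abs_le]
      constructor <;> simp only [hF] <;> linarith
    have hGb : ∀ z : X × X, ‖G z‖ ≤ 2 * rbar ^ 2 := by
      intro z
      have h1 := abs_le.mp (hkb (part z.1 p) (part z.1 p))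
      have h2 := abs_le.mp (hkb (part z.1 p) (part z.2 p))
      have e1 : kbar (part z.1 p) (part z.1 p) ^ 2 ≤ rbar ^ 2 :=
        sq_le_sq' (by linarith) (by linarith)
      have e2 : kbar (part z.1 p) (part z.2 p) ^ 2 ≤ rbar ^ 2 :=
        sq_le_sq' (by linarith) (by linarith)
      have e3 := sq_nonneg (kbar (part z.1 p) (part z.1 p))
      have e4 := sq_nonneg (kbar (part z.1 p) (part z.2 p))
      rw [Real.norm_eq_abs, abs_le]
      constructor <;> simp only [hG] <;> linarith
    -- integrability
    have hFi : Integrable F (ρX.prod ρX) := by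
      refine (integrable_const (2 * (rbar + r0) ^ 2)).mono'
        hFm.aestronglyMeasurable ?_
      filter_upwards with z using hFb z
    have hGi : Integrable G (ρX.prod ρX) := by
      refine (integrable_const (2 * rbar ^ 2)).mono'
        hGm.aestronglyMeasurable ?_
      filter_upwards with z using hGb z
    -- pointwise inequality
    have hpt : ∀ z : X × X, F z ≤ G z + (4 * rbar + r0) * r0 := by
      intro z
      have h1 := abs_le.mp (hkb (part z.1 p) (part z.1 p))
      have h2 := abs_le.mp (hkb (part z.1 p) (part z.2 p))
      have h4 := abs_le.mp (hk0b z.1 z.2)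
      have h5 := hk0dn z.1
      have h6 := hk0d z.1
      have h7 := psd_diag hkbarPSD (part z.1 p)
      simp only [hF, hG]
      nlinarith [sq_nonneg (k0 z.1 z.2)]
    -- rewrite iterated integrals as product integrals
    have hCovEq : Cov p p = ∫ z, F z ∂(ρX.prod ρX) := by
      rw [hCov p p]
      simp only [eq_self_iff_true, if_true, mul_one]
      rw [← integral_prod _ hFi]
    have hCovbarEq : Covbar p p = ∫ z, G z ∂(ρX.prod ρX) := by
      rw [hCovbar p p]
      rw [← integral_prod _ hGi]
    rw [hCovEq, hCovbarEq]
    calc ∫ z, F z ∂(ρX.prod ρX)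
        ≤ ∫ z, (G z + (4 * rbar + r0) * r0) ∂(ρX.prod ρX) :=
          integral_mono hFi (hGi.add (integrable_const _)) hpt
      _ = ∫ z, G z ∂(ρX.prod ρX) + (4 * rbar + r0) * r0 := by
          rw [integral_add hGi (integrable_const _), integral_const]
          simp
  · rw [hCov p q, hCovbar p q]
    simp [hpq]
end
end
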